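/- arXiv:2010.04749 — 9 statements merged into one kernel-verified Lean document; each statement's English description precedes it below -/
import Mathlib

section
/- If event system (E2, I2) refines event system (E1, I1) modulo a mediator function π (i.e., there is a forward simulation relation R such that every initial state of E2 is related to some initial state of E1, and every transition of E2 from an R-related state can be matched by a π-mapped transition of E1 preserving R), then the element-wise image under π of the set of traces of (E2, I2) is contained in the set of traces of (E1, I1). -/
/-- Event systems: labeled transition systems. -/
structure ES (S E : Type) where
  trans : S → E → S → Prop

namespace ES

/-- Extension of the transition relation to finite sequences of events. -/
inductive mtrans {S E : Type} (M : ES S E) : S → List E → S → Prop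
  | nil (s : S) : mtrans M s [] s
  | snoc {s s' s'' : S} {τ : List E} {e : E} :
      mtrans M s τ s' → M.trans s' e s'' → mtrans M s (τ ++ [e]) s''

/-- The traces of an event system starting from a set of initial states. -/
def traces {S E : Type} (M : ES S E) (I : Set S) : Set (List E) :=
  {τ | ∃ s ∈ I, ∃ s', M.mtrans s τ s'}

/-- Traces starting from a single state. -/
def tracesFrom {S E : Type} (M : ES S E) (s : S) : Set (List E) :=
  M.traces {s}

end ES

/-- Parallel composition of event systems modulo a partial synchronization
function `χ : E1 × E2 ⇀ E`. -/
def ES.par {S1 E1 S2 E2 E : Type} (M1 : ES S1 E1) (M2 : ES S2 E2)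
    (χ : E1 → E2 → Option E) : ES (S1 × S2) E :=
  ⟨fun s e s' => ∃ e1 e2, χ e1 e2 = some e ∧ M1.trans s.1 e1 s'.1 ∧ M2.trans s.2 e2 s'.2⟩

/-- Composition of trace sets modulo `χ`. -/
def tcomp {E1 E2 E : Type} (χ : E1 → E2 → Option E)
    (T1 : Set (List E1)) (T2 : Set (List E2)) : Set (List E) :=
  {τ | ∃ τ1 ∈ T1, ∃ τ2 ∈ T2, ∃ h1 : τ1.length = τ.length, ∃ h2 : τ2.length = τ.length,
      ∀ i : Fin τ.length,
        χ (τ1.get (Fin.cast h1.symm i)) (τ2.get (Fin.cast h2.symm i)) = some (τ.get i)}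

/-- Refinement (forward simulation modulo a mediator function) implies
trace inclusion: the element-wise `π`-image of the traces of the concrete
system is contained in the traces of the abstract system. -/
theorem refinement_soundness {S1 E1 S2 E2 : Type}
    (M1 : ES S1 E1) (M2 : ES S2 E2) (I1 : Set S1) (I2 : Set S2)
    (π : E2 → E1) (R : S1 → S2 → Prop)
    (hinit : ∀ s2 ∈ I2, ∃ s1 ∈ I1, R s1 s2)
    (hstep : ∀ s1 s2 e2 s2', R s1 s2 → M2.trans s2 e2 s2' →
      ∃ s1', M1.trans s1 (π e2) s1' ∧ R s1' s2') :
    (List.map π) '' M2.traces I2 ⊆ M1.traces I1 := by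
  have key : ∀ {s2 τ s2'}, M2.mtrans s2 τ s2' → ∀ s1, R s1 s2 →
      ∃ s1', M1.mtrans s1 (τ.map π) s1' ∧ R s1' s2' := by
    intro s2 τ s2' h
    induction h with
    | nil => exact fun s1 hr => ⟨s1, ES.mtrans.nil _, hr⟩
    | snoc hmt hstep' ih =>
      intro s1 hr
      obtain ⟨s1', hmt1, hr'⟩ := ih s1 hr
      obtain ⟨s1'', ht, hr''⟩ := hstep _ _ _ _ hr' hstep'
      exact ⟨s1'', by simpa using ES.mtrans.snoc hmt1 ht, hr''⟩
  rintro τ ⟨τ2, ⟨s2, hs2, s2', hmt⟩, rfl⟩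
  obtain ⟨s1, hs1, hr⟩ := hinit s2 hs2
  obtain ⟨s1', hmt1, _⟩ := key hmt s1 hr
  exact ⟨s1, hs1, s1', hmt1⟩
end

section
/- For event systems E1 and E2 with initial state sets I1 and I2, and a partial synchronization function χ : E1 × E2 ⇀ E, the traces of the parallel composition E1 ∥χ E2 starting from I1 × I2 equal the χ-composition of the trace sets: traces(E1 ∥χ E2, I1 × I2) = traces(E1, I1) ∥χ traces(E2, I2). -/
section Aux

variable {S1 E1 S2 E2 E : Type} {M1 : ES S1 E1} {M2 : ES S2 E2}
  {χ : E1 → E2 → Option E}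

/-- Snoc-style triple zipping relation. -/
inductive Zip (χ : E1 → E2 → Option E) : List E1 → List E2 → List E → Prop
  | nil : Zip χ [] [] []
  | snoc {l1 l2 l e1 e2 e} : Zip χ l1 l2 l → χ e1 e2 = some e →
      Zip χ (l1 ++ [e1]) (l2 ++ [e2]) (l ++ [e])

lemma mtrans_snoc_inv {S E : Type} {M : ES S E} {s s'' : S} {τ : List E} {e : E}
    (h : M.mtrans s (τ ++ [e]) s'') : ∃ s', M.mtrans s τ s' ∧ M.trans s' e s'' := by
  generalize hl : τ ++ [e] = l at h
  cases h with
  | nil => simp at hl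
  | snoc h1 h2 =>
    obtain ⟨rfl, he⟩ := List.append_inj' hl rfl
    obtain rfl := List.singleton_inj.mp he.symm
    exact ⟨_, h1, h2⟩

lemma mtrans_nil_inv {S E : Type} {M : ES S E} {s s' : S}
    (h : M.mtrans s [] s') : s = s' := by
  generalize hl : ([] : List E) = l at h
  cases h with
  | nil => rfl
  | snoc h1 h2 => simp at hl

lemma zip_lengths {l1 l2 l} (h : Zip χ l1 l2 l) :
    l1.length = l.length ∧ l2.length = l.length := by
  induction h with
  | nil => simp
  | snoc _ _ ih => simp [ih.1, ih.2]

lemma zip_get {l1 l2 l} (h : Zip χ l1 l2 l) (i : Fin l.length)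
    (h1 : l1.length = l.length) (h2 : l2.length = l.length) :
    χ (l1.get (Fin.cast h1.symm i)) (l2.get (Fin.cast h2.symm i)) = some (l.get i) := by
  induction h with
  | nil => exact absurd i.2 (by simp)
  | @snoc l1 l2 l e1 e2 e _ hχ ih =>
    simp only [List.get_eq_getElem, Fin.coe_cast, List.getElem_append]
    have hlen : l1.length = l.length ∧ l2.length = l.length := zip_lengths ‹_›
    rcases lt_or_ge (i : ℕ) l.length with hi | hi
    · rw [dif_pos (by omega), dif_pos (by omega), dif_pos hi]
      exact ih ⟨i, hi⟩ hlen.1 hlen.2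
    · have : (i : ℕ) = l.length := by
        have := i.2; simp at this; omega
      rw [dif_neg (by omega), dif_neg (by omega), dif_neg (by omega)]
      simpa [this, hlen.1, hlen.2] using hχ

lemma zip_of_get : ∀ (l : List E) (l1 : List E1) (l2 : List E2)
    (h1 : l1.length = l.length) (h2 : l2.length = l.length),
    (∀ i : Fin l.length,
      χ (l1.get (Fin.cast h1.symm i)) (l2.get (Fin.cast h2.symm i)) = some (l.get i)) →
    Zip χ l1 l2 l := by
  intro l
  induction l using List.reverseRecOn with
  | nil =>
    intro l1 l2 h1 h2 _
    obtain rfl := List.length_eq_zero_iff.mp h1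
    obtain rfl := List.length_eq_zero_iff.mp h2
    exact Zip.nil
  | append_singleton l e ih =>
    intro l1 l2 h1 h2 hχ
    rcases l1.eq_nil_or_concat with rfl | ⟨l1', e1, rfl⟩
    · simp at h1
    rcases l2.eq_nil_or_concat with rfl | ⟨l2', e2, rfl⟩
    · simp at h2
    simp only [List.concat_eq_append, List.length_append, List.length_singleton] at h1 h2 ⊢
    have h1' : l1'.length = l.length := by omega
    have h2' : l2'.length = l.length := by omega
    refine Zip.snoc (ih l1' l2' h1' h2' fun i => ?_) ?_
    · have hi1 : (i : ℕ) < l1'.length := by have := i.2; omega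
      have hi2 : (i : ℕ) < l2'.length := by have := i.2; omega
      have := hχ ⟨i, by simp⟩
      simpa [List.getElem_append, i.2, hi1, hi2] using this
    · have := hχ ⟨l.length, by simp⟩
      simpa [List.getElem_append, h1', h2'] using this

lemma par_mtrans_fwd {p q : S1 × S2} {τ : List E}
    (h : (M1.par M2 χ).mtrans p τ q) :
    ∃ τ1 τ2, Zip χ τ1 τ2 τ ∧ M1.mtrans p.1 τ1 q.1 ∧ M2.mtrans p.2 τ2 q.2 := by
  induction h with
  | nil => exact ⟨[], [], Zip.nil, ES.mtrans.nil _, ES.mtrans.nil _⟩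
  | snoc _ hstep ih =>
    obtain ⟨τ1, τ2, hz, hm1, hm2⟩ := ih
    obtain ⟨e1, e2, hχ, h1, h2⟩ := hstep
    exact ⟨τ1 ++ [e1], τ2 ++ [e2], hz.snoc hχ, hm1.snoc h1, hm2.snoc h2⟩

lemma par_mtrans_bwd {τ1 τ2 τ} (hz : Zip χ τ1 τ2 τ) :
    ∀ {s1 s1' s2 s2'}, M1.mtrans s1 τ1 s1' → M2.mtrans s2 τ2 s2' →
    (M1.par M2 χ).mtrans (s1, s2) τ (s1', s2') := by
  induction hz with
  | nil =>
    intro s1 s1' s2 s2' h1 h2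
    obtain rfl := mtrans_nil_inv h1
    obtain rfl := mtrans_nil_inv h2
    exact ES.mtrans.nil _
  | @snoc l1 l2 l e1 e2 e _ hχ ih =>
    intro s1 s1' s2 s2' h1 h2
    obtain ⟨t1, hm1, hs1⟩ := mtrans_snoc_inv h1
    obtain ⟨t2, hm2, hs2⟩ := mtrans_snoc_inv h2
    exact ES.mtrans.snoc (ih hm1 hm2) ⟨e1, e2, hχ, hs1, hs2⟩

end Aux

/-- Composition theorem: the traces of the parallel composition from the
product of the initial state sets equal the `χ`-composition of the trace sets. -/
theorem trace_composition {S1 E1 S2 E2 E : Type}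
    (M1 : ES S1 E1) (M2 : ES S2 E2) (I1 : Set S1) (I2 : Set S2)
    (χ : E1 → E2 → Option E) :
    (M1.par M2 χ).traces (I1 ×ˢ I2) = tcomp χ (M1.traces I1) (M2.traces I2) := by
  ext τ
  constructor
  · rintro ⟨⟨s1, s2⟩, ⟨hs1, hs2⟩, ⟨s1', s2'⟩, hm⟩
    obtain ⟨τ1, τ2, hz, hm1, hm2⟩ := par_mtrans_fwd hm
    obtain ⟨h1, h2⟩ := zip_lengths hz
    exact ⟨τ1, ⟨s1, hs1, s1', hm1⟩, τ2, ⟨s2, hs2, s2', hm2⟩, h1, h2,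
      fun i => zip_get hz i h1 h2⟩
  · rintro ⟨τ1, ⟨s1, hs1, s1', hm1⟩, τ2, ⟨s2, hs2, s2', hm2⟩, h1, h2, hχ⟩
    exact ⟨(s1, s2), ⟨hs1, hs2⟩, (s1', s2'),
      par_mtrans_bwd (zip_of_get τ τ1 τ2 h1 h2 hχ) hm1 hm2⟩
end

section
/- Interleaving composition via the function χI (with χI(e1, skip) = e1, χI(skip, e2) = e2, and χI(e1, e2) undefined when neither is skip) yields traces that are exactly the shuffles (interleavings) of pairs of traces from the two component systems, after removing the skip padding. -/
/-- A shuffle (interleaving) of two lists. -/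
inductive Shuffle {α β : Type} : List α → List β → List (α ⊕ β) → Prop
  | nil : Shuffle [] [] []
  | left {x xs ys zs} : Shuffle xs ys zs → Shuffle (x :: xs) ys (Sum.inl x :: zs)
  | right {y xs ys zs} : Shuffle xs ys zs → Shuffle xs (y :: ys) (Sum.inr y :: zs)

/-- The synchronization function for interleaving composition:
`χI(e1, skip) = e1`, `χI(skip, e2) = e2`, undefined otherwise. -/
def chiI {E1 E2 : Type} [DecidableEq E1] [DecidableEq E2] (skip1 : E1) (skip2 : E2) :
    E1 → E2 → Option (E1 ⊕ E2) :=
  fun e1 e2 =>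
    if e2 = skip2 then some (Sum.inl e1)
    else if e1 = skip1 then some (Sum.inr e2) else none

namespace InterleavingAux

lemma mtrans_cons {S E : Type} {M : ES S E} {s t s' : S} {e : E} {τ : List E}
    (h : M.trans s e t) (h' : M.mtrans t τ s') : M.mtrans s (e :: τ) s' := by
  induction h' with
  | nil => exact (ES.mtrans.nil s).snoc h
  | snoc h1 h2 ih => exact (List.cons_append) ▸ ih.snoc h2

lemma mtrans_nil_inv {S E : Type} {M : ES S E} {s s' : S}
    (h : M.mtrans s [] s') : s = s' := by
  generalize hρ : ([] : List E) = ρ at h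
  induction h with
  | nil => rfl
  | snoc h1 h2 ih => simp at hρ

lemma mtrans_cons_inv' {S E : Type} {M : ES S E} {s s' : S} {ρ : List E}
    (h : M.mtrans s ρ s') :
    ∀ e τ, ρ = e :: τ → ∃ t, M.trans s e t ∧ M.mtrans t τ s' := by
  induction h with
  | nil => intro e τ h; simp at h
  | snoc h1 h2 ih =>
    rename_i s' s'' τ0 e0
    intro e τ hτ
    cases τ0 with
    | nil =>
      simp at hτ
      obtain ⟨rfl, rfl⟩ := hτ
      exact ⟨s'', mtrans_nil_inv h1 ▸ h2, ES.mtrans.nil _⟩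
    | cons a l =>
      simp at hτ
      obtain ⟨rfl, rfl⟩ := hτ
      obtain ⟨t, ht, hrun⟩ := ih a l rfl
      exact ⟨t, ht, hrun.snoc h2⟩

lemma mtrans_cons_inv {S E : Type} {M : ES S E} {s s' : S} {e : E} {τ : List E}
    (h : M.mtrans s (e :: τ) s') : ∃ t, M.trans s e t ∧ M.mtrans t τ s' :=
  mtrans_cons_inv' h e τ rfl

lemma shuffle_snoc_left {α β : Type} {xs : List α} {ys : List β} {zs} {x : α}
    (h : Shuffle xs ys zs) : Shuffle (xs ++ [x]) ys (zs ++ [Sum.inl x]) := by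
  induction h with
  | nil => exact Shuffle.left Shuffle.nil
  | left h ih => exact Shuffle.left ih
  | right h ih => exact Shuffle.right ih

lemma shuffle_snoc_right {α β : Type} {xs : List α} {ys : List β} {zs} {y : β}
    (h : Shuffle xs ys zs) : Shuffle xs (ys ++ [y]) (zs ++ [Sum.inr y]) := by
  induction h with
  | nil => exact Shuffle.right Shuffle.nil
  | left h ih => exact Shuffle.left ih
  | right h ih => exact Shuffle.right ih

lemma filter_keep {E1 E2 : Type} [DecidableEq E1] [DecidableEq E2]
    {skip1 : E1} {skip2 : E2} {e : E1 ⊕ E2} (τ : List (E1 ⊕ E2))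
    (h1 : e ≠ Sum.inl skip1) (h2 : e ≠ Sum.inr skip2) :
    (e :: τ).filter (fun e => e ≠ Sum.inl skip1 ∧ e ≠ Sum.inr skip2) =
      e :: τ.filter (fun e => e ≠ Sum.inl skip1 ∧ e ≠ Sum.inr skip2) := by
  simp [List.filter_cons, h1, h2]

lemma filter_drop {E1 E2 : Type} [DecidableEq E1] [DecidableEq E2]
    {skip1 : E1} {skip2 : E2} {e : E1 ⊕ E2} (τ : List (E1 ⊕ E2))
    (h : e = Sum.inl skip1 ∨ e = Sum.inr skip2) :
    (e :: τ).filter (fun e => e ≠ Sum.inl skip1 ∧ e ≠ Sum.inr skip2) =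
      τ.filter (fun e => e ≠ Sum.inl skip1 ∧ e ≠ Sum.inr skip2) := by
  rcases h with rfl | rfl <;> simp [List.filter_cons]

lemma forward_key {S1 E1 S2 E2 : Type} [DecidableEq E1] [DecidableEq E2]
    {M1 : ES S1 E1} {M2 : ES S2 E2} {skip1 : E1} {skip2 : E2}
    {τ : List (E1 ⊕ E2)} {p : S1 × S2} {p' : S1 × S2}
    (h : (M1.par M2 (chiI skip1 skip2)).mtrans p τ p') :
    ∃ τ1 τ2, M1.mtrans p.1 τ1 p'.1 ∧ M2.mtrans p.2 τ2 p'.2 ∧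
      Shuffle (τ1.filter (· ≠ skip1)) (τ2.filter (· ≠ skip2))
        (τ.filter (fun e => e ≠ Sum.inl skip1 ∧ e ≠ Sum.inr skip2)) := by
  induction h with
  | nil => exact ⟨[], [], ES.mtrans.nil _, ES.mtrans.nil _, by simpa using Shuffle.nil⟩
  | snoc h1 h2 ih =>
    rename_i τ0 e
    obtain ⟨τ1, τ2, hr1, hr2, hsh⟩ := ih
    obtain ⟨e1, e2, hchi, ht1, ht2⟩ := h2
    rw [List.filter_append]
    by_cases h2s : e2 = skip2
    · have he : e = Sum.inl e1 := by
        simp [chiI, h2s] at hchi; exact hchi.symm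
      subst he
      refine ⟨τ1 ++ [e1], τ2 ++ [e2], hr1.snoc ht1, hr2.snoc ht2, ?_⟩
      rw [List.filter_append, List.filter_append]
      by_cases h1s : e1 = skip1
      · simpa [h1s, h2s] using hsh
      · simpa [h1s, h2s] using shuffle_snoc_left hsh
    · have h1s : e1 = skip1 := by
        by_contra h1s
        simp [chiI, h1s, h2s] at hchi
      have he : e = Sum.inr e2 := by
        simp [chiI, h1s, h2s] at hchi; exact hchi.symm
      subst he
      refine ⟨τ1 ++ [e1], τ2 ++ [e2], hr1.snoc ht1, hr2.snoc ht2, ?_⟩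
      rw [List.filter_append, List.filter_append]
      simpa [h1s, h2s] using shuffle_snoc_right hsh

lemma backward_key {S1 E1 S2 E2 : Type} [DecidableEq E1] [DecidableEq E2]
    (M1 : ES S1 E1) (M2 : ES S2 E2) (skip1 : E1) (skip2 : E2)
    (hsk1 : ∀ s, M1.trans s skip1 s) (hsk2 : ∀ s, M2.trans s skip2 s) :
    ∀ n (τ1 : List E1) (τ2 : List E2) (σ : List (E1 ⊕ E2)) s1 s1' s2 s2',
    τ1.length + τ2.length ≤ n →
    M1.mtrans s1 τ1 s1' → M2.mtrans s2 τ2 s2' →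
    Shuffle (τ1.filter (· ≠ skip1)) (τ2.filter (· ≠ skip2)) σ →
    ∃ τ, (M1.par M2 (chiI skip1 skip2)).mtrans (s1, s2) τ (s1', s2') ∧
      τ.filter (fun e => e ≠ Sum.inl skip1 ∧ e ≠ Sum.inr skip2) = σ := by
  intro n
  induction n with
  | zero =>
    intro τ1 τ2 σ s1 s1' s2 s2' hn h1 h2 hsh
    have e1 : τ1 = [] := by
      cases τ1 with | nil => rfl | cons a l => simp at hn
    have e2 : τ2 = [] := by
      cases τ2 with | nil => rfl | cons a l => simp at hn
    subst e1; subst e2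
    obtain rfl := mtrans_nil_inv h1
    obtain rfl := mtrans_nil_inv h2
    simp only [List.filter_nil] at hsh
    cases hsh
    exact ⟨[], ES.mtrans.nil _, rfl⟩
  | succ n ih =>
    intro τ1 τ2 σ s1 s1' s2 s2' hn h1 h2 hsh
    cases τ1 with
    | cons e1 τ1' =>
      obtain ⟨t1, ht1, hr1⟩ := mtrans_cons_inv h1
      by_cases h1s : e1 = skip1
      · have hsh' : Shuffle (τ1'.filter (· ≠ skip1)) (τ2.filter (· ≠ skip2)) σ := by
          simpa [h1s] using hsh
        obtain ⟨τ, hτ, hfil⟩ := ih τ1' τ2 σ t1 s1' s2 s2' (by simp at hn ⊢; omega) hr1 h2 hsh'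
        refine ⟨Sum.inl skip1 :: τ,
          mtrans_cons ⟨skip1, skip2, by simp [chiI], h1s ▸ ht1, hsk2 s2⟩ hτ, ?_⟩
        rw [filter_drop τ (Or.inl rfl)]; exact hfil
      · have hf1 : (e1 :: τ1').filter (· ≠ skip1) = e1 :: τ1'.filter (· ≠ skip1) := by
          simp [List.filter_cons, h1s]
        cases τ2 with
        | cons e2 τ2' =>
          obtain ⟨t2, ht2, hr2⟩ := mtrans_cons_inv h2
          by_cases h2s : e2 = skip2
          · have hsh' : Shuffle ((e1 :: τ1').filter (· ≠ skip1))
                (τ2'.filter (· ≠ skip2)) σ := by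
              simpa [h2s] using hsh
            obtain ⟨τ, hτ, hfil⟩ :=
              ih (e1 :: τ1') τ2' σ s1 s1' t2 s2' (by simp at hn ⊢; omega) h1 hr2 hsh'
            refine ⟨Sum.inl skip1 :: τ,
              mtrans_cons ⟨skip1, skip2, by simp [chiI], hsk1 s1, h2s ▸ ht2⟩ hτ, ?_⟩
            rw [filter_drop τ (Or.inl rfl)]; exact hfil
          · have hf2 : (e2 :: τ2').filter (· ≠ skip2) = e2 :: τ2'.filter (· ≠ skip2) := by
              simp [List.filter_cons, h2s]
            rw [hf1, hf2] at hsh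
            cases hsh with
            | left hsh' =>
              rename_i zs
              rw [← hf2] at hsh'
              obtain ⟨τ, hτ, hfil⟩ :=
                ih τ1' (e2 :: τ2') zs t1 s1' s2 s2' (by simp at hn ⊢; omega) hr1 h2 hsh'
              refine ⟨Sum.inl e1 :: τ,
                mtrans_cons ⟨e1, skip2, by simp [chiI], ht1, hsk2 s2⟩ hτ, ?_⟩
              rw [filter_keep τ (by simp [h1s]) (by simp)]; rw [hfil]
            | right hsh' =>
              rename_i zs
              rw [← hf1] at hsh'
              obtain ⟨τ, hτ, hfil⟩ :=
                ih (e1 :: τ1') τ2' zs s1 s1' t2 s2' (by simp at hn ⊢; omega) h1 hr2 hsh'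
              refine ⟨Sum.inr e2 :: τ,
                mtrans_cons ⟨skip1, e2, by simp [chiI, h2s], hsk1 s1, ht2⟩ hτ, ?_⟩
              rw [filter_keep τ (by simp) (by simp [h2s])]; rw [hfil]
        | nil =>
          obtain rfl := mtrans_nil_inv h2
          rw [hf1] at hsh
          simp only [List.filter_nil] at hsh
          cases hsh with
          | left hsh' =>
            rename_i zs
            obtain ⟨τ, hτ, hfil⟩ :=
              ih τ1' [] zs t1 s1' s2 s2 (by simp at hn ⊢; omega) hr1 (ES.mtrans.nil _)
                (by simpa using hsh')
            refine ⟨Sum.inl e1 :: τ,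
              mtrans_cons ⟨e1, skip2, by simp [chiI], ht1, hsk2 s2⟩ hτ, ?_⟩
            rw [filter_keep τ (by simp [h1s]) (by simp)]; rw [hfil]
    | nil =>
      obtain rfl := mtrans_nil_inv h1
      cases τ2 with
      | nil =>
        obtain rfl := mtrans_nil_inv h2
        simp only [List.filter_nil] at hsh
        cases hsh
        exact ⟨[], ES.mtrans.nil _, rfl⟩
      | cons e2 τ2' =>
        obtain ⟨t2, ht2, hr2⟩ := mtrans_cons_inv h2
        by_cases h2s : e2 = skip2
        · have hsh' : Shuffle (([] : List E1).filter (· ≠ skip1))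
              (τ2'.filter (· ≠ skip2)) σ := by simpa [h2s] using hsh
          obtain ⟨τ, hτ, hfil⟩ :=
            ih [] τ2' σ s1 s1 t2 s2' (by simp at hn ⊢; omega) (ES.mtrans.nil _) hr2 hsh'
          refine ⟨Sum.inl skip1 :: τ,
            mtrans_cons ⟨skip1, skip2, by simp [chiI], hsk1 s1, h2s ▸ ht2⟩ hτ, ?_⟩
          rw [filter_drop τ (Or.inl rfl)]; exact hfil
        · have hf2 : (e2 :: τ2').filter (· ≠ skip2) = e2 :: τ2'.filter (· ≠ skip2) := by
            simp [List.filter_cons, h2s]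
          rw [hf2] at hsh
          simp only [List.filter_nil] at hsh
          cases hsh with
          | right hsh' =>
            rename_i zs
            obtain ⟨τ, hτ, hfil⟩ :=
              ih [] τ2' zs s1 s1 t2 s2' (by simp at hn ⊢; omega) (ES.mtrans.nil _) hr2
                (by simpa using hsh')
            refine ⟨Sum.inr e2 :: τ,
              mtrans_cons ⟨skip1, e2, by simp [chiI, h2s], hsk1 s1, ht2⟩ hτ, ?_⟩
            rw [filter_keep τ (by simp) (by simp [h2s])]; rw [hfil]

end InterleavingAux

/-- Interleaving composition via `χI` yields exactly the shuffles of pairs of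
component traces, after removing the skip padding. -/
theorem interleaving_traces_are_shuffles {S1 E1 S2 E2 : Type}
    [DecidableEq E1] [DecidableEq E2]
    (M1 : ES S1 E1) (M2 : ES S2 E2) (I1 : Set S1) (I2 : Set S2)
    (skip1 : E1) (skip2 : E2)
    (hsk1 : ∀ s, M1.trans s skip1 s) (hsk2 : ∀ s, M2.trans s skip2 s) :
    {σ | ∃ τ ∈ (M1.par M2 (chiI skip1 skip2)).traces (I1 ×ˢ I2),
        σ = τ.filter (fun e => e ≠ Sum.inl skip1 ∧ e ≠ Sum.inr skip2)} =
    {σ | ∃ τ1 ∈ M1.traces I1, ∃ τ2 ∈ M2.traces I2,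
        Shuffle (τ1.filter (· ≠ skip1)) (τ2.filter (· ≠ skip2)) σ} := by
  ext σ
  simp only [Set.mem_setOf_eq]
  constructor
  · rintro ⟨τ, ⟨⟨s1, s2⟩, hI, ⟨s1', s2'⟩, hrun⟩, rfl⟩
    obtain ⟨hI1, hI2⟩ := hI
    obtain ⟨τ1, τ2, hr1, hr2, hsh⟩ := InterleavingAux.forward_key hrun
    exact ⟨τ1, ⟨s1, hI1, s1', hr1⟩, τ2, ⟨s2, hI2, s2', hr2⟩, hsh⟩
  · rintro ⟨τ1, ⟨s1, hI1, s1', hr1⟩, τ2, ⟨s2, hI2, s2', hr2⟩, hsh⟩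
    obtain ⟨τ, hrun, hfil⟩ := InterleavingAux.backward_key M1 M2 skip1 skip2 hsk1 hsk2
      (τ1.length + τ2.length) τ1 τ2 σ s1 s1' s2 s2' le_rfl hr1 hr2 hsh
    exact ⟨τ, ⟨(s1, s2), ⟨hI1, hI2⟩, (s1', s2'), hrun⟩, hfil.symm⟩
end

section
/- For an I/O-guarded event system G = (S, Act, guards G, updates U) and any state s, the set of traces of G from s equals the set of traces of the process proc(G, s), where proc(G, s) is defined corecursively as the countable choice, over all bio ∈ Bios and outputs v ∈ Values with G_{(bio,v)}(s) true, of the prefixed process bio(v, z). proc(G, U_{bio(v,z)}(s)). -/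
/-! ## Chunks and heaps -/

/-- Chunks: I/O permissions `bio(t, v, w, t')` and tokens `token(t)`. -/
inductive Chunk (B V Pl : Type) : Type
  | bio (b : B) (t : Pl) (v w : V) (t' : Pl)
  | token (t : Pl)

/-- Heaps are (possibly infinite) multisets of chunks, i.e. functions to `ℕ∞`. -/
abbrev Heap (B V Pl : Type) := Chunk B V Pl → ℕ∞

open Classical in
/-- The singleton heap containing one chunk. -/
noncomputable def Heap.single {B V Pl : Type} (c : Chunk B V Pl) : Heap B V Pl :=
  fun c' => if c' = c then 1 else 0

/-- Well-typedness of a chunk w.r.t. a typing function `Ty`. -/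
def Chunk.wellTyped {B V Pl : Type} (Ty : B → V → Set V) : Chunk B V Pl → Prop
  | .bio b _ v w _ => w ∈ Ty b v
  | .token _ => True

/-! ## Assertions (coinductive, as an M-type) -/

/-- Heads of the assertion functor. -/
inductive AssnHead (B V Pl : Type) : Type
  | bool (b : Bool)
  | chunk (c : Chunk B V Pl)
  | star
  | exv
  | expl

/-- Arities (branching types) of the assertion functor. -/
def AssnAr (B V Pl : Type) : AssnHead B V Pl → Type
  | .bool _ => Empty
  | .chunk _ => Empty
  | .star => Bool
  | .exv => V
  | .expl => Pl

/-- The assertion polynomial functor. -/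
def AssnF (B V Pl : Type) : PFunctor := ⟨AssnHead B V Pl, AssnAr B V Pl⟩

/-- Coinductive separation logic assertions:
`φ ::=ν b | c | φ₁ ⋆ φ₂ | ∃v. φ | ∃t. φ`. -/
def Assn (B V Pl : Type) : Type := (AssnF B V Pl).M

namespace Assn

variable {B V Pl : Type}

/-- Boolean assertion. -/
def mkBool (b : Bool) : Assn B V Pl := PFunctor.M.mk ⟨.bool b, fun e => e.elim⟩

/-- Chunk assertion. -/
def mkChunk (c : Chunk B V Pl) : Assn B V Pl := PFunctor.M.mk ⟨.chunk c, fun e => e.elim⟩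

/-- Separating conjunction. -/
def star (φ ψ : Assn B V Pl) : Assn B V Pl :=
  PFunctor.M.mk ⟨.star, fun x : Bool => if x then φ else ψ⟩

/-- Existential quantification over values. -/
def exv (f : V → Assn B V Pl) : Assn B V Pl := PFunctor.M.mk ⟨.exv, f⟩

/-- Existential quantification over places. -/
def expl (f : Pl → Assn B V Pl) : Assn B V Pl := PFunctor.M.mk ⟨.expl, f⟩

end Assn

/-- One step of the satisfaction relation. -/
def SatF {B V Pl : Type} (Ty : B → V → Set V)
    (R : Heap B V Pl → Assn B V Pl → Prop) (h : Heap B V Pl) (φ : Assn B V Pl) : Prop :=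
  match PFunctor.M.dest φ with
  | ⟨.bool b, _⟩ => b = true
  | ⟨.chunk c, _⟩ => 0 < h c ∧ c.wellTyped Ty
  | ⟨.star, f⟩ => ∃ h1 h2, h = h1 + h2 ∧ R h1 (f true) ∧ R h2 (f false)
  | ⟨.exv, f⟩ => ∃ v, R h (f v)
  | ⟨.expl, f⟩ => ∃ t, R h (f t)

/-- Coinductive satisfaction relation `h ⊨ φ`, as the greatest fixed point
of `SatF` (defined as the union of all post-fixed points). -/
def sat {B V Pl : Type} (Ty : B → V → Set V) (h : Heap B V Pl) (φ : Assn B V Pl) : Prop :=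
  ∃ R, (∀ h' φ', R h' φ' → SatF Ty R h' φ') ∧ R h φ

/-! ## Heap transition system -/

/-- The heap transition system over `Option Heap` (`none` is the chaotic state ⊥),
with rules Bio, Contradict, and Chaos. -/
inductive HTrans {B V Pl : Type} (Ty : B → V → Set V) :
    Option (Heap B V Pl) → B × V × V → Option (Heap B V Pl) → Prop
  | bio {b : B} {v w : V} {t t' : Pl} {h : Heap B V Pl} :
      w ∈ Ty b v →
      HTrans Ty (some (Heap.single (.token t) + Heap.single (.bio b t v w t') + h)) (b, v, w)
        (some (Heap.single (.token t') + h))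
  | contradict {b : B} {v w w' : V} {t t' : Pl} {h : Heap B V Pl} :
      w ≠ w' → w ∈ Ty b v → w' ∈ Ty b v →
      HTrans Ty (some (Heap.single (.token t) + Heap.single (.bio b t v w t') + h)) (b, v, w')
        none
  | chaos {b : B} {v w : V} : w ∈ Ty b v → HTrans Ty none (b, v, w) none

/-- The heap transition system as an event system. -/
def hES {B V Pl : Type} (Ty : B → V → Set V) : ES (Option (Heap B V Pl)) (B × V × V) :=
  ⟨HTrans Ty⟩

/-- Traces executable in all heaps of a set of heaps. -/
def tracesH {B V Pl : Type} (Ty : B → V → Set V) (H : Set (Heap B V Pl)) :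
    Set (List (B × V × V)) :=
  {τ | ∀ h ∈ H, τ ∈ (hES Ty).tracesFrom (some h)}

/-- Traces of an assertion: traces executable in all its heap models. -/
def tracesHA {B V Pl : Type} (Ty : B → V → Set V) (φ : Assn B V Pl) :
    Set (List (B × V × V)) :=
  tracesH Ty {h | sat Ty h φ}

/-! ## Processes (coinductive, as an M-type) -/

/-- Heads of the process functor. -/
inductive ProcHead (B V : Type) : Type
  | null
  | pre (b : B) (v : V)
  | choice

/-- Arities of the process functor. -/
def ProcAr (B V : Type) : ProcHead B V → Type
  | .null => Empty
  | .pre _ _ => V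
  | .choice => Bool

/-- The process polynomial functor. -/
def ProcF (B V : Type) : PFunctor := ⟨ProcHead B V, ProcAr B V⟩

/-- Coinductive processes: `P ::=ν Null | bio(v, z).P | P₁ ⊕ P₂`. -/
def Proc (B V : Type) : Type := (ProcF B V).M

namespace Proc

variable {B V : Type}

/-- The inactive process. -/
def null : Proc B V := PFunctor.M.mk ⟨.null, fun e => e.elim⟩

/-- Prefixing with an I/O operation, binding the input in the continuation. -/
def pre (b : B) (v : V) (k : V → Proc B V) : Proc B V := PFunctor.M.mk ⟨.pre b v, k⟩

/-- Binary choice. -/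
def choice (P Q : Proc B V) : Proc B V :=
  PFunctor.M.mk ⟨.choice, fun x : Bool => if x then P else Q⟩

end Proc

/-- Operational semantics of processes (rules Pref and Choice). -/
inductive PTrans {B V : Type} (Ty : B → V → Set V) : Proc B V → B × V × V → Proc B V → Prop
  | pref {P : Proc B V} {b : B} {v w : V} {k : V → Proc B V} :
      w ∈ Ty b v → PFunctor.M.dest P = ⟨.pre b v, k⟩ → PTrans Ty P (b, v, w) (k w)
  | chl {P P' : Proc B V} {a : B × V × V} {f : Bool → Proc B V} :
      PFunctor.M.dest P = ⟨.choice, f⟩ → PTrans Ty (f true) a P' → PTrans Ty P a P'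
  | chr {P P' : Proc B V} {a : B × V × V} {f : Bool → Proc B V} :
      PFunctor.M.dest P = ⟨.choice, f⟩ → PTrans Ty (f false) a P' → PTrans Ty P a P'

/-- The process operational semantics as an event system. -/
def pES {B V : Type} (Ty : B → V → Set V) : ES (Proc B V) (B × V × V) := ⟨PTrans Ty⟩

/-- Countable (ℕ-indexed) choice, defined corecursively from binary choice. -/
def vchoice {B V : Type} (f : ℕ → Proc B V) : Proc B V :=
  PFunctor.M.corec
    (fun s : Proc B V ⊕ ℕ =>
      match s with
      | .inl p => ⟨(PFunctor.M.dest p).1, fun x => Sum.inl ((PFunctor.M.dest p).2 x)⟩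
      | .inr n => ⟨.choice, fun x : Bool => if x then Sum.inl (f n) else Sum.inr (n + 1)⟩)
    (Sum.inr 0)

/-! ## Embedding of processes into assertions -/

/-- States of the corecursion defining the embedding `emb`. -/
inductive EmbSt (B V Pl : Type) : Type
  | proc (P : Proc B V) (t : Pl)
  | ex1 (b : B) (v : V) (k : V → Proc B V) (t t' : Pl)
  | star1 (b : B) (v : V) (k : V → Proc B V) (t t' : Pl) (z : V)
  | leafChunk (c : Chunk B V Pl)

/-- One step of the corecursion defining the embedding `emb`. -/
def embStep {B V Pl : Type} : EmbSt B V Pl → (AssnF B V Pl).Obj (EmbSt B V Pl)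
  | .proc P t =>
    match PFunctor.M.dest P with
    | ⟨.null, _⟩ => ⟨.bool true, fun e => e.elim⟩
    | ⟨.pre b v, k⟩ => ⟨.expl, fun t' => .ex1 b v k t t'⟩
    | ⟨.choice, f⟩ => ⟨.star, fun x : Bool => .proc (f x) t⟩
  | .ex1 b v k t t' => ⟨.exv, fun z => .star1 b v k t t' z⟩
  | .star1 b v k t t' z =>
      ⟨.star, fun x : Bool => if x then .leafChunk (.bio b t v z t') else .proc (k z) t'⟩
  | .leafChunk c => ⟨.chunk c, fun e => e.elim⟩

/-- The embedding `emb(P, t)` of a process and a place into an assertion: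
`emb(Null, t) = true`, `emb(bio(v,z).P, t) = ∃t',z'. bio(t,v,z',t') ⋆ emb(P[z'/z], t')`,
`emb(P₁ ⊕ P₂, t) = emb(P₁, t) ⋆ emb(P₂, t)`. -/
def embA {B V Pl : Type} (P : Proc B V) (t : Pl) : Assn B V Pl :=
  PFunctor.M.corec embStep (.proc P t)

/-- The process assertion `emb(P) = ∃t. token(t) ⋆ emb(P, t)`. -/
def procAssn {B V : Type} (Pl : Type) (P : Proc B V) : Assn B V Pl :=
  Assn.expl (fun t => Assn.star (Assn.mkChunk (.token t)) (embA P t))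

/-- ℕ-indexed iterated separating conjunction, defined corecursively. -/
def AllStar {B V Pl : Type} (f : ℕ → Assn B V Pl) : Assn B V Pl :=
  PFunctor.M.corec
    (fun s : Assn B V Pl ⊕ ℕ =>
      match s with
      | .inl a => ⟨(PFunctor.M.dest a).1, fun x => Sum.inl ((PFunctor.M.dest a).2 x)⟩
      | .inr n => ⟨.star, fun x : Bool => if x then Sum.inl (f n) else Sum.inr (n + 1)⟩)
    (Sum.inr 0)

/-! ## I/O-guarded event systems and their translation to processes -/

/-- An I/O-guarded event system: guards depend only on the state and the output,
updates compute the next state from output and input. -/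
structure IOGES (B V S : Type) where
  guard : B → V → S → Prop
  update : B → V → V → S → S

/-- The event system associated with an I/O-guarded event system:
`s →bio(v,w) s'` iff the guard holds, `w ∈ Ty(bio, v)`, and `s' = U(s)`. -/
def IOGES.es {B V S : Type} (G : IOGES B V S) (Ty : B → V → Set V) : ES S (B × V × V) :=
  ⟨fun s a s' => G.guard a.1 a.2.1 s ∧ a.2.2 ∈ Ty a.1 a.2.1 ∧
      s' = G.update a.1 a.2.1 a.2.2 s⟩

/-- States of the corecursion defining `proc(G, s)`. -/
inductive PrSt (S : Type) : Type
  | spine (n : ℕ) (s : S)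
  | item (n : ℕ) (s : S)

open Classical in
/-- The corecursive translation `proc(G, s)` of an I/O-guarded event system into
a process: the countable choice over all `bio ∈ Bios` and outputs `v` whose guard
holds in `s` of the prefixed processes `bio(v, z). proc(G, U_{bio(v,z)}(s))`,
via an enumeration `e` of the pairs `(bio, v)`. -/
noncomputable def procOf {B V S : Type} (e : ℕ → B × V) (G : IOGES B V S) (s : S) :
    Proc B V :=
  PFunctor.M.corec
    (fun st : PrSt S =>
      match st with
      | .spine n s => ⟨.choice, fun x : Bool => if x then .item n s else .spine (n + 1) s⟩
      | .item n s =>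
          if G.guard (e n).1 (e n).2 s then
            ⟨.pre (e n).1 (e n).2, fun w => .spine 0 (G.update (e n).1 (e n).2 w s)⟩
          else ⟨.null, fun x => x.elim⟩)
    (.spine 0 s)

/-! ## Canonical heap models -/

open Classical in
/-- The I/O permission (as a singleton heap, or the empty heap) found at position
`pos` of process `P` under input schedule `ρ`, with previous place `pp`,
current position `cp`, and traversed trace `τ`. -/
noncomputable def pm {B V : Type} (ρ : List (B × V × V) → B → V → V) :
    Proc B V → List (B × V × V) → List Bool → List Bool → List Bool →
      Heap B V (List Bool)
  | P, τ, pp, cp, [] =>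
    (match PFunctor.M.dest P with
     | ⟨.pre b v, _⟩ => Heap.single (Chunk.bio b pp v (ρ τ b v) (cp ++ [true]))
     | _ => 0)
  | P, τ, pp, cp, d :: pos =>
    (match PFunctor.M.dest P, d with
     | ⟨.pre b v, k⟩, true =>
         pm ρ (k (ρ τ b v)) (τ ++ [(b, v, ρ τ b v)]) (cp ++ [true]) (cp ++ [true]) pos
     | ⟨.choice, f⟩, d' => pm ρ (f d') τ pp (cp ++ [d']) pos
     | _, _ => 0)

/-- Pointwise (possibly infinite) sum of a family of heaps. -/
noncomputable def hSum {B V Pl ι : Type} (f : ι → Heap B V Pl) : Heap B V Pl :=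
  fun c => ⨆ F : Finset ι, ∑ i ∈ F, f i c

/-- The canonical model construction `gmod(P, ρ, τ, ppos, cpos)`: the multiset
sum of `pm(P, ρ, τ, ppos, cpos, pos)` over all positions `pos`. -/
noncomputable def gmod {B V : Type} (ρ : List (B × V × V) → B → V → V)
    (P : Proc B V) (τ : List (B × V × V)) (pp cp : List Bool) :
    Heap B V (List Bool) :=
  hSum (fun pos : List Bool => pm ρ P τ pp cp pos)

/-- Well-typedness of an input schedule. -/
def schedWT {B V : Type} (Ty : B → V → Set V) (ρ : List (B × V × V) → B → V → V) : Prop :=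
  ∀ τ b v, ρ τ b v ∈ Ty b v

/-- The canonical model `cmod(P, ρ) = gmod(P, ρ, [], [], [])`. -/
noncomputable def cmod {B V : Type} (ρ : List (B × V × V) → B → V → V) (P : Proc B V) :
    Heap B V (List Bool) :=
  gmod ρ P [] [] []

/-- The canonical model with a token added at the previous place. -/
noncomputable def gmodTok {B V : Type} (ρ : List (B × V × V) → B → V → V)
    (P : Proc B V) (τ : List (B × V × V)) (pp cp : List Bool) :
    Heap B V (List Bool) :=
  Heap.single (Chunk.token pp) + gmod ρ P τ pp cp

/-- The set `can(P)` of token-added canonical models over all well-typed schedules. -/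
def canSet {B V : Type} (Ty : B → V → Set V) (P : Proc B V) :
    Set (Heap B V (List Bool)) :=
  {h | ∃ ρ, schedWT Ty ρ ∧ h = Heap.single (Chunk.token []) + cmod ρ P}

/-- The set of source places of I/O permissions in a heap. -/
def srcplaces {B V Pl : Type} (h : Heap B V Pl) : Set Pl :=
  {t | ∃ b v w t', 0 < h (Chunk.bio b t v w t')}

/-- A heap is dead for a position if it has no tokens and no source place
extending the position. -/
def deadFor {B V : Type} (pos : List Bool) (h : Heap B V (List Bool)) : Prop :=
  (∀ t, h (Chunk.token t) = 0) ∧ ∀ p' ∈ srcplaces h, ¬ pos <+: p'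

open Classical in
/-- The witness schedule `ρwit(σ)`: for proper prefixes `τ` of `σ`, return the
input of the next matching action of `σ`; otherwise an arbitrary well-typed value
(given by `pick`). -/
noncomputable def rhoWit {B V : Type} (pick : B → V → V) (σ : List (B × V × V)) :
    List (B × V × V) → B → V → V :=
  fun τ b v =>
    if h : ∃ w, ∃ rest, τ <+: σ ∧ σ.drop τ.length = (b, v, w) :: rest
    then h.choose
    else pick b v

section Aux

variable {B V S : Type}

open Classical in
/-- The corecursion step of `procOf`. -/
noncomputable def prStep (e : ℕ → B × V) (G : IOGES B V S) :
    PrSt S → (ProcF B V).Obj (PrSt S) :=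
  fun st =>
    match st with
    | .spine n s => ⟨.choice, fun x : Bool => if x then .item n s else .spine (n + 1) s⟩
    | .item n s =>
        if G.guard (e n).1 (e n).2 s then
          ⟨.pre (e n).1 (e n).2, fun w => .spine 0 (G.update (e n).1 (e n).2 w s)⟩
        else ⟨.null, fun x => x.elim⟩

/-- The process corresponding to a corecursion state. -/
noncomputable def prOf (e : ℕ → B × V) (G : IOGES B V S) (st : PrSt S) : Proc B V :=
  PFunctor.M.corec (prStep e G) st

theorem procOf_eq (e : ℕ → B × V) (G : IOGES B V S) (s : S) :
    procOf e G s = prOf e G (.spine 0 s) := rfl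

theorem dest_spine (e : ℕ → B × V) (G : IOGES B V S) (n : ℕ) (s : S) :
    PFunctor.M.dest (prOf e G (.spine n s)) =
      ⟨.choice, fun x : Bool =>
        if x then prOf e G (.item n s) else prOf e G (.spine (n + 1) s)⟩ := by
  rw [prOf, PFunctor.M.dest_corec]
  simp only [prStep, PFunctor.map_eq]
  congr 1
  exact congrArg (Sigma.mk ProcHead.choice) (funext fun x => by cases x <;> rfl)

theorem dest_item_pos (e : ℕ → B × V) (G : IOGES B V S) (n : ℕ) (s : S)
    (h : G.guard (e n).1 (e n).2 s) :
    PFunctor.M.dest (prOf e G (.item n s)) =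
      ⟨.pre (e n).1 (e n).2,
        fun w => prOf e G (.spine 0 (G.update (e n).1 (e n).2 w s))⟩ := by
  rw [prOf, PFunctor.M.dest_corec]
  simp only [prStep, h, if_pos, PFunctor.map_eq]
  rfl

theorem dest_item_neg (e : ℕ → B × V) (G : IOGES B V S) (n : ℕ) (s : S)
    (h : ¬ G.guard (e n).1 (e n).2 s) :
    PFunctor.M.dest (prOf e G (.item n s)) = ⟨.null, fun x => x.elim⟩ := by
  rw [prOf, PFunctor.M.dest_corec]
  simp only [prStep, h, if_neg, not_false_iff, PFunctor.map_eq]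
  congr 1
  exact (congrArg ((ProcF B V).map (PFunctor.M.corec (prStep e G))) (if_neg not_false)).trans
    (congrArg (Sigma.mk ProcHead.null) (funext fun x => x.elim))

/-- State of a corecursion state. -/
def PrSt.state : PrSt S → S
  | .spine _ s => s
  | .item _ s => s

theorem ptrans_char (Ty : B → V → Set V) (e : ℕ → B × V) (G : IOGES B V S)
    {P P' : Proc B V} {a : B × V × V} (h : PTrans Ty P a P') :
    ∀ st : PrSt S, P = prOf e G st →
      G.guard a.1 a.2.1 st.state ∧ a.2.2 ∈ Ty a.1 a.2.1 ∧
        P' = prOf e G (.spine 0 (G.update a.1 a.2.1 a.2.2 st.state)) := by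
  induction h with
  | @pref P b v w k hw hd =>
    rintro (⟨n, s⟩ | ⟨n, s⟩) rfl
    · rw [dest_spine] at hd
      cases hd
    · by_cases hg : G.guard (e n).1 (e n).2 s
      · rw [dest_item_pos e G n s hg] at hd
        obtain ⟨h1, h2⟩ := Sigma.mk.inj_iff.mp hd
        cases h1
        cases eq_of_heq h2
        exact ⟨hg, hw, rfl⟩
      · rw [dest_item_neg e G n s hg] at hd
        cases hd
  | @chl P P' a f hd _ ih =>
    rintro (⟨n, s⟩ | ⟨n, s⟩) rfl
    · rw [dest_spine] at hd
      obtain ⟨h1, h2⟩ := Sigma.mk.inj_iff.mp hd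
      cases eq_of_heq h2
      simpa [PrSt.state] using ih (.item n s) rfl
    · by_cases hg : G.guard (e n).1 (e n).2 s
      · rw [dest_item_pos e G n s hg] at hd; cases hd
      · rw [dest_item_neg e G n s hg] at hd; cases hd
  | @chr P P' a f hd _ ih =>
    rintro (⟨n, s⟩ | ⟨n, s⟩) rfl
    · rw [dest_spine] at hd
      obtain ⟨h1, h2⟩ := Sigma.mk.inj_iff.mp hd
      cases eq_of_heq h2
      simpa [PrSt.state] using ih (.spine (n + 1) s) rfl
    · by_cases hg : G.guard (e n).1 (e n).2 s
      · rw [dest_item_pos e G n s hg] at hd; cases hd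
      · rw [dest_item_neg e G n s hg] at hd; cases hd

theorem ptrans_of_guard (Ty : B → V → Set V) (e : ℕ → B × V)
    (he : Function.Surjective e) (G : IOGES B V S) {b : B} {v w : V} {s : S}
    (hg : G.guard b v s) (hw : w ∈ Ty b v) :
    PTrans Ty (prOf e G (.spine 0 s)) (b, v, w)
      (prOf e G (.spine 0 (G.update b v w s))) := by
  obtain ⟨n, hn⟩ := he (b, v)
  have hstep : ∀ m, PTrans Ty (prOf e G (.spine (n - m) s)) (b, v, w)
      (prOf e G (.spine 0 (G.update b v w s))) := by
    intro m
    induction m with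
    | zero =>
      apply PTrans.chl (dest_spine e G n s)
      simp only [if_pos]
      have hg' : G.guard (e n).1 (e n).2 s := by rw [hn]; exact hg
      have := PTrans.pref (Ty := Ty) (w := w)
        (by rw [hn]; exact hw) (dest_item_pos e G n s hg')
      rw [hn] at this
      simpa [hn] using this
    | succ m ih =>
      rcases le_or_gt n m with h | h
      · have heq : n - (m + 1) = n - m := by omega
        rwa [heq]
      · apply PTrans.chr (dest_spine e G (n - (m + 1)) s)
        show PTrans Ty (prOf e G (.spine (n - (m + 1) + 1) s)) _ _
        have heq : n - (m + 1) + 1 = n - m := by omega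
        rwa [heq]
  simpa using hstep n

end Aux

theorem mtrans_fwd {B V S : Type} (Ty : B → V → Set V) (e : ℕ → B × V)
    (he : Function.Surjective e) (G : IOGES B V S) {s s' : S} {τ : List (B × V × V)}
    (h : (G.es Ty).mtrans s τ s') :
    (pES Ty).mtrans (prOf e G (.spine 0 s)) τ (prOf e G (.spine 0 s')) := by
  induction h with
  | nil => exact ES.mtrans.nil _
  | @snoc s2 s3 τ a h1 h2 ih =>
    obtain ⟨hg, hw, hupd⟩ := h2
    subst hupd
    exact ES.mtrans.snoc ih (by obtain ⟨b, v, w⟩ := a; exact ptrans_of_guard Ty e he G hg hw)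

theorem mtrans_bwd {B V S : Type} (Ty : B → V → Set V) (e : ℕ → B × V)
    (G : IOGES B V S) {P Q : Proc B V} {τ : List (B × V × V)}
    (h : (pES Ty).mtrans P τ Q) :
    ∀ s : S, P = prOf e G (.spine 0 s) →
      ∃ s', Q = prOf e G (.spine 0 s') ∧ (G.es Ty).mtrans s τ s' := by
  induction h with
  | nil => exact fun s hs => ⟨s, hs, ES.mtrans.nil s⟩
  | @snoc P2 P3 τ a h1 h2 ih =>
    intro s hs
    obtain ⟨s2, rfl, hm⟩ := ih s hs
    obtain ⟨hg, hw, hP3⟩ := ptrans_char Ty e G h2 (.spine 0 s2) rfl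
    exact ⟨_, hP3, ES.mtrans.snoc hm ⟨hg, hw, rfl⟩⟩

/-- Correctness of the translation of I/O-guarded event systems into processes:
for any I/O-guarded event system `G` and state `s`, the traces of `G` from `s`
equal the traces of the process `proc(G, s)`, given an enumeration `e` of all
pairs of I/O operations and outputs. -/
theorem ioges_proc_trace_equiv {B V S : Type} (Ty : B → V → Set V)
    (e : ℕ → B × V) (he : Function.Surjective e) (G : IOGES B V S) (s : S) :
    (G.es Ty).tracesFrom s = (pES Ty).tracesFrom (procOf e G s) := by
  rw [procOf_eq]
  ext τ
  simp only [ES.tracesFrom, ES.traces, Set.mem_setOf_eq, Set.mem_singleton_iff,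
    exists_eq_left]
  constructor
  · rintro ⟨s', h⟩
    exact ⟨_, mtrans_fwd Ty e he G h⟩
  · rintro ⟨Q, h⟩
    obtain ⟨s', _, hm⟩ := mtrans_bwd Ty e G h s rfl
    exact ⟨s', hm⟩
end

section
/- The embedding of countable choice into separation-logic assertions equals an iterated separating conjunction: emb(⊕_{v∈S} P(v), t) = ⋆_{v∈S} emb(P(v), t), for any countable set of values S and place t. -/
/-! ### Auxiliary lemmas for the proof -/

/-- Copy corecursion lemma: a corecursor acting as identity on `inl` is the identity there. -/
theorem corec_copy {F : PFunctor.{0}} {β : Type} (g : F.M ⊕ β → F.Obj (F.M ⊕ β))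
    (hg : ∀ p, g (.inl p) = ⟨(PFunctor.M.dest p).1, fun x => .inl ((PFunctor.M.dest p).2 x)⟩)
    (p : F.M) : PFunctor.M.corec g (.inl p) = p := by
  apply PFunctor.M.bisim (fun x y => x = PFunctor.M.corec g (.inl y))
  · intro x y hxy
    rcases hdest : PFunctor.M.dest y with ⟨a, f⟩
    refine ⟨a, fun i => PFunctor.M.corec g (.inl (f i)), f, ?_, rfl, fun i => rfl⟩
    rw [hxy, PFunctor.M.dest_corec, hg, hdest, PFunctor.map_eq]; rfl
  · rfl

/-- The corecursor underlying `vchoice`. -/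
def vchoiceAux {B V : Type} (f : ℕ → Proc B V) :
    Proc B V ⊕ ℕ → (ProcF B V).Obj (Proc B V ⊕ ℕ) := fun s =>
  match s with
  | .inl p => ⟨(PFunctor.M.dest p).1, fun x => Sum.inl ((PFunctor.M.dest p).2 x)⟩
  | .inr n => ⟨.choice, fun x : Bool => if x then Sum.inl (f n) else Sum.inr (n + 1)⟩

/-- Countable choice started at index `n`. -/
def vchF {B V : Type} (f : ℕ → Proc B V) (n : ℕ) : Proc B V :=
  PFunctor.M.corec (vchoiceAux f) (.inr n)

theorem vchoice_eq_vchF {B V : Type} (f : ℕ → Proc B V) : vchoice f = vchF f 0 := rfl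

theorem vchF_dest {B V : Type} (f : ℕ → Proc B V) (n : ℕ) :
    PFunctor.M.dest (vchF f n) =
      ⟨.choice, fun x : Bool => if x then f n else vchF f (n + 1)⟩ := by
  rw [vchF, PFunctor.M.dest_corec]
  show PFunctor.map _ _ (vchoiceAux f (.inr n)) = _
  rw [vchoiceAux]
  refine (PFunctor.map_eq (P := ProcF B V) _ (ProcHead.choice : (ProcF B V).A) _).trans ?_
  congr 1
  funext x
  cases x
  · rfl
  · exact corec_copy _ (fun p => rfl) (f n)

/-- The corecursor underlying `AllStar`. -/
def allStarAux {B V Pl : Type} (f : ℕ → Assn B V Pl) :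
    Assn B V Pl ⊕ ℕ → (AssnF B V Pl).Obj (Assn B V Pl ⊕ ℕ) := fun s =>
  match s with
  | .inl a => ⟨(PFunctor.M.dest a).1, fun x => Sum.inl ((PFunctor.M.dest a).2 x)⟩
  | .inr n => ⟨.star, fun x : Bool => if x then Sum.inl (f n) else Sum.inr (n + 1)⟩

/-- Iterated separating conjunction started at index `n`. -/
def allStF {B V Pl : Type} (f : ℕ → Assn B V Pl) (n : ℕ) : Assn B V Pl :=
  PFunctor.M.corec (allStarAux f) (.inr n)

theorem allStar_eq_allStF {B V Pl : Type} (f : ℕ → Assn B V Pl) :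
    AllStar f = allStF f 0 := rfl

theorem allStF_dest {B V Pl : Type} (f : ℕ → Assn B V Pl) (n : ℕ) :
    PFunctor.M.dest (allStF f n) =
      ⟨.star, fun x : Bool => if x then f n else allStF f (n + 1)⟩ := by
  rw [allStF, PFunctor.M.dest_corec]
  show PFunctor.map _ _ (allStarAux f (.inr n)) = _
  rw [allStarAux]
  refine (PFunctor.map_eq (P := AssnF B V Pl) _ (AssnHead.star : (AssnF B V Pl).A) _).trans ?_
  congr 1
  funext x
  cases x
  · rfl
  · exact corec_copy _ (fun p => rfl) (f n)

theorem embA_dest_choice {B V Pl : Type} {Q : Proc B V} {h : Bool → Proc B V} (t : Pl)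
    (hQ : PFunctor.M.dest Q = ⟨.choice, h⟩) :
    PFunctor.M.dest (embA Q t) = ⟨.star, fun x : Bool => embA (h x) t⟩ := by
  rw [embA, PFunctor.M.dest_corec]
  show PFunctor.map _ _ (embStep (.proc Q t)) = _
  rw [embStep, hQ]
  rfl

/-- The embedding of countable choice equals an iterated separating conjunction:
`emb(⊕_{v∈S} P(v), t) = ⋆_{v∈S} emb(P(v), t)`, for a countable set of values `S`
(given by an enumeration `e`). -/
theorem emb_vchoice_eq_allStar {B V Pl : Type} (S : Set V) (e : ℕ → V)
    (hS : Set.range e = S) (P : V → Proc B V) (t : Pl) :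
    embA (vchoice (fun n => P (e n))) t = AllStar (fun n => embA (P (e n)) t) := by
  set f : ℕ → Proc B V := fun n => P (e n) with hf
  rw [vchoice_eq_vchF, allStar_eq_allStF]
  apply PFunctor.M.bisim
    (fun x y => x = y ∨ ∃ n, x = embA (vchF f n) t ∧ y = allStF (fun n => embA (f n) t) n)
  · rintro x y (rfl | ⟨n, rfl, rfl⟩)
    · rcases hdest : PFunctor.M.dest x with ⟨a, g⟩
      exact ⟨a, g, g, rfl, rfl, fun i => Or.inl rfl⟩
    · refine ⟨.star, fun x : Bool => embA (if x then f n else vchF f (n + 1)) t,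
        fun x : Bool => if x then embA (f n) t else allStF (fun n => embA (f n) t) (n + 1),
        embA_dest_choice t (vchF_dest f n), allStF_dest _ n, ?_⟩
      intro i
      cases i
      · exact Or.inr ⟨n + 1, rfl, rfl⟩
      · exact Or.inl rfl
  · exact Or.inr ⟨0, rfl, rfl⟩
end

section
/- Every trace of a process P is a trace of its process assertion: traces(P) ⊆ tracesH(emb(P)), where emb(P) = ∃t. token(t) ⋆ emb(P, t), and tracesH(φ) is the set of traces executable in all heap models of φ under the heap transition semantics. -/
/-! ## Auxiliary lemmas for the main theorem -/

section MainProof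

variable {B V Pl : Type} {Ty : B → V → Set V}

lemma ptrans_wt {P P' : Proc B V} {a : B × V × V} (h : PTrans Ty P a P') :
    a.2.2 ∈ Ty a.1 a.2.1 := by
  induction h with
  | pref hw _ => exact hw
  | chl _ _ ih => exact ih
  | chr _ _ ih => exact ih

lemma heap_split {h : Heap B V Pl} {c : Chunk B V Pl} (hc : 0 < h c) :
    h = Heap.single c + fun c' => h c' - Heap.single c c' := by
  funext c'
  by_cases e : c' = c
  · subst e
    simp only [Pi.add_apply, Heap.single, if_pos rfl]
    exact (add_tsub_cancel_of_le (Order.one_le_iff_pos.mpr hc)).symm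
  · simp [Heap.single, e]

lemma satF_iff_bool {R : Heap B V Pl → Assn B V Pl → Prop} {h : Heap B V Pl}
    {φ : Assn B V Pl} {b : Bool} {f} (hd : PFunctor.M.dest φ = ⟨AssnHead.bool b, f⟩) :
    SatF Ty R h φ ↔ b = true := by
  unfold SatF; rw [hd]

lemma satF_iff_chunk {R : Heap B V Pl → Assn B V Pl → Prop} {h : Heap B V Pl}
    {φ : Assn B V Pl} {c : Chunk B V Pl} {f}
    (hd : PFunctor.M.dest φ = ⟨AssnHead.chunk c, f⟩) :
    SatF Ty R h φ ↔ 0 < h c ∧ c.wellTyped Ty := by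
  unfold SatF; rw [hd]

lemma satF_iff_star {R : Heap B V Pl → Assn B V Pl → Prop} {h : Heap B V Pl}
    {φ : Assn B V Pl} {f : Bool → Assn B V Pl}
    (hd : PFunctor.M.dest φ = ⟨AssnHead.star, f⟩) :
    SatF Ty R h φ ↔ ∃ h1 h2, h = h1 + h2 ∧ R h1 (f true) ∧ R h2 (f false) := by
  unfold SatF; rw [hd]

lemma satF_iff_exv {R : Heap B V Pl → Assn B V Pl → Prop} {h : Heap B V Pl}
    {φ : Assn B V Pl} {f : V → Assn B V Pl}
    (hd : PFunctor.M.dest φ = ⟨AssnHead.exv, f⟩) :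
    SatF Ty R h φ ↔ ∃ v, R h (f v) := by
  unfold SatF; rw [hd]; exact Iff.rfl

lemma satF_iff_expl {R : Heap B V Pl → Assn B V Pl → Prop} {h : Heap B V Pl}
    {φ : Assn B V Pl} {f : Pl → Assn B V Pl}
    (hd : PFunctor.M.dest φ = ⟨AssnHead.expl, f⟩) :
    SatF Ty R h φ ↔ ∃ t, R h (f t) := by
  unfold SatF; rw [hd]; exact Iff.rfl

/-- Core simulation lemma: a transition of `P` can be matched against any
model of `emb(P, t)` by finding an appropriate I/O permission chunk. -/
lemma core_step {P P' : Proc B V} {a : B × V × V} (hstep : PTrans Ty P a P') :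
    ∀ (h : Heap B V Pl) (t : Pl), sat Ty h (embA P t) →
      ∃ w' t' hr, w' ∈ Ty a.1 a.2.1 ∧
        h = Heap.single (Chunk.bio a.1 t a.2.1 w' t') + hr ∧
        (w' = a.2.2 → ∃ hc hf, hr = hc + hf ∧ sat Ty hc (embA P' t')) := by
  induction hstep with
  | @pref P b v w k hw hd =>
    intro h t hs
    obtain ⟨R, hR, h0⟩ := hs
    have e1 : PFunctor.M.dest (embA P t) =
        ⟨AssnHead.expl, fun t' => PFunctor.M.corec embStep (EmbSt.ex1 b v k t t')⟩ := by
      rw [embA, PFunctor.M.dest_corec]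
      simp [embStep, hd, PFunctor.map]
      rfl
    obtain ⟨t', h1⟩ := (satF_iff_expl (Ty := Ty) e1).mp (hR _ _ h0)
    have e2 : PFunctor.M.dest (PFunctor.M.corec embStep (EmbSt.ex1 b v k t t') :
          Assn B V Pl) =
        ⟨AssnHead.exv, fun z => PFunctor.M.corec embStep (EmbSt.star1 b v k t t' z)⟩ := by
      rw [PFunctor.M.dest_corec]
      simp [embStep, PFunctor.map]
      rfl
    obtain ⟨z, h2⟩ := (satF_iff_exv (Ty := Ty) e2).mp (hR _ _ h1)
    have e3 : PFunctor.M.dest (PFunctor.M.corec embStep (EmbSt.star1 b v k t t' z) :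
          Assn B V Pl) =
        ⟨AssnHead.star, fun x : Bool => PFunctor.M.corec embStep
          (if x then EmbSt.leafChunk (Chunk.bio b t v z t') else EmbSt.proc (k z) t')⟩ := by
      rw [PFunctor.M.dest_corec]
      simp [embStep, PFunctor.map]
      rfl
    obtain ⟨ha, hb, hab, hA, hB⟩ := (satF_iff_star (Ty := Ty) e3).mp (hR _ _ h2)
    have e4 : PFunctor.M.dest (PFunctor.M.corec embStep
          (EmbSt.leafChunk (Chunk.bio b t v z t')) : Assn B V Pl) =
        ⟨AssnHead.chunk (Chunk.bio b t v z t'),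
          fun e => (PFunctor.M.corec embStep (e.elim : EmbSt B V Pl))⟩ := by
      rw [PFunctor.M.dest_corec]
      simp [embStep, PFunctor.map]
      rfl
    obtain ⟨hpos, hwt⟩ := (satF_iff_chunk (Ty := Ty) e4).mp (hR _ _ hA)
    have hzty : z ∈ Ty b v := hwt
    set ha' : Heap B V Pl := fun c' => ha c' - Heap.single (Chunk.bio b t v z t') c' with hha'
    refine ⟨z, t', ha' + hb, hzty, ?_, ?_⟩
    · rw [hab, heap_split hpos]
      abel
    · intro hzw
      refine ⟨hb, ha', add_comm _ _, ?_⟩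
      subst hzw
      exact ⟨R, hR, hB⟩
  | @chl P P' a f hd hinner ih =>
    intro h t hs
    obtain ⟨R, hR, h0⟩ := hs
    have e1 : PFunctor.M.dest (embA P t) =
        ⟨AssnHead.star, fun x : Bool => PFunctor.M.corec embStep (EmbSt.proc (f x) t)⟩ := by
      rw [embA, PFunctor.M.dest_corec]
      simp [embStep, hd, PFunctor.map]
      rfl
    obtain ⟨h1, h2, h12, hA, hB⟩ := (satF_iff_star (Ty := Ty) e1).mp (hR _ _ h0)
    obtain ⟨w', t', hr, hw', hdec, hcont⟩ := ih h1 t ⟨R, hR, hA⟩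
    refine ⟨w', t', hr + h2, hw', ?_, ?_⟩
    · rw [h12, hdec]; abel
    · intro hzw
      obtain ⟨hc, hf, hrr, hsc⟩ := hcont hzw
      exact ⟨hc, hf + h2, by rw [hrr]; abel, hsc⟩
  | @chr P P' a f hd hinner ih =>
    intro h t hs
    obtain ⟨R, hR, h0⟩ := hs
    have e1 : PFunctor.M.dest (embA P t) =
        ⟨AssnHead.star, fun x : Bool => PFunctor.M.corec embStep (EmbSt.proc (f x) t)⟩ := by
      rw [embA, PFunctor.M.dest_corec]
      simp [embStep, hd, PFunctor.map]
      rfl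
    obtain ⟨h1, h2, h12, hA, hB⟩ := (satF_iff_star (Ty := Ty) e1).mp (hR _ _ h0)
    obtain ⟨w', t', hr, hw', hdec, hcont⟩ := ih h2 t ⟨R, hR, hB⟩
    refine ⟨w', t', hr + h1, hw', ?_, ?_⟩
    · rw [h12, hdec]; abel
    · intro hzw
      obtain ⟨hc, hf, hrr, hsc⟩ := hcont hzw
      exact ⟨hc, hf + h1, by rw [hrr]; abel, hsc⟩

/-- The simulation invariant between a process and a heap. -/
def InvP (Ty : B → V → Set V) (P : Proc B V) (h : Heap B V Pl) : Prop :=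
  ∃ t h1 h2, h = Heap.single (Chunk.token t) + h1 + h2 ∧ sat Ty h1 (embA P t)

/-- The simulation invariant lifted to `Option Heap`. -/
def GoodSt (Ty : B → V → Set V) (P : Proc B V) (os : Option (Heap B V Pl)) : Prop :=
  os = none ∨ ∃ h, os = some h ∧ InvP Ty P h

lemma step_sim {P P' : Proc B V} {a : B × V × V} {os : Option (Heap B V Pl)}
    (hstep : PTrans Ty P a P') (hg : GoodSt Ty P os) :
    ∃ os', HTrans Ty os a os' ∧ GoodSt Ty P' os' := by
  obtain ⟨b, v, w⟩ := a
  have hwty : w ∈ Ty b v := ptrans_wt hstep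
  rcases hg with rfl | ⟨h, rfl, t, h1, h2, rfl, hsat⟩
  · exact ⟨none, HTrans.chaos hwty, Or.inl rfl⟩
  · obtain ⟨w', t', hr, hw', hdec, hcont⟩ := core_step hstep h1 t hsat
    by_cases ew : w' = w
    · subst ew
      obtain ⟨hc, hf, hrr, hsc⟩ := hcont rfl
      refine ⟨some (Heap.single (Chunk.token t') + (hr + h2)), ?_,
        Or.inr ⟨_, rfl, t', hc, hf + h2, by rw [hrr]; abel, hsc⟩⟩
      have heq : Heap.single (Chunk.token t) + h1 + h2 =
          Heap.single (Chunk.token t) + Heap.single (Chunk.bio b t v w' t') + (hr + h2) := by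
        rw [hdec]; abel
      rw [heq]
      exact HTrans.bio hw'
    · refine ⟨none, ?_, Or.inl rfl⟩
      have heq : Heap.single (Chunk.token t) + h1 + h2 =
          Heap.single (Chunk.token t) + Heap.single (Chunk.bio b t v w' t') + (hr + h2) := by
        rw [hdec]; abel
      rw [heq]
      exact HTrans.contradict ew hw' hwty

lemma sim_mtrans {P P' : Proc B V} {τ : List (B × V × V)}
    (hm : (pES Ty).mtrans P τ P') :
    ∀ os : Option (Heap B V Pl), GoodSt Ty P os →
      ∃ os', (hES Ty).mtrans os τ os' ∧ GoodSt Ty P' os' := by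
  induction hm with
  | nil => exact fun os hg => ⟨os, ES.mtrans.nil _, hg⟩
  | snoc hm1 hstep ih =>
    intro os hg
    obtain ⟨os1, hmt1, hg1⟩ := ih os hg
    obtain ⟨os2, hstep2, hg2⟩ := step_sim hstep hg1
    exact ⟨os2, ES.mtrans.snoc hmt1 hstep2, hg2⟩

end MainProof

/-- Every trace of a process `P` is a trace of its process assertion
`emb(P) = ∃t. token(t) ⋆ emb(P, t)`. -/
theorem traces_proc_subset_embedding {B V Pl : Type} (Ty : B → V → Set V)
    (P : Proc B V) :
    (pES Ty).tracesFrom P ⊆ tracesHA Ty (procAssn Pl P) := by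
  intro τ hτ
  obtain ⟨s, hs, P', hm⟩ := hτ
  rcases hs with rfl
  intro h hsat
  obtain ⟨R, hR, h0⟩ := hsat
  have e1 : PFunctor.M.dest (procAssn Pl s) =
      ⟨AssnHead.expl, fun t : Pl =>
        Assn.star (Assn.mkChunk (Chunk.token t)) (embA s t)⟩ := rfl
  obtain ⟨t, h1⟩ := (satF_iff_expl (Ty := Ty) e1).mp (hR _ _ h0)
  have e2 : PFunctor.M.dest (Assn.star (Assn.mkChunk (Chunk.token t)) (embA s t)) =
      ⟨AssnHead.star, fun x : Bool =>
        if x then Assn.mkChunk (Chunk.token t) else embA s t⟩ := rfl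
  obtain ⟨ha, hb, hab, hA, hB⟩ := (satF_iff_star (Ty := Ty) e2).mp (hR _ _ h1)
  have e3 : PFunctor.M.dest (Assn.mkChunk (Chunk.token t) : Assn B V Pl) =
      ⟨AssnHead.chunk (Chunk.token t), fun e => e.elim⟩ := rfl
  obtain ⟨hpos, -⟩ := (satF_iff_chunk (Ty := Ty) e3).mp (hR _ _ hA)
  have hinv : GoodSt Ty s (some h) := by
    set ha' : Heap B V Pl := fun c' => ha c' - Heap.single (Chunk.token t) c' with hha'
    have hsp : ha = Heap.single (Chunk.token t) + ha' := heap_split hpos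
    refine Or.inr ⟨h, rfl, t, hb, ha', ?_, ⟨R, hR, hB⟩⟩
    rw [hab, hsp]
    abel
  obtain ⟨os', hm', -⟩ := sim_mtrans hm (some h) hinv
  exact ⟨some h, rfl, os', hm'⟩
end

section
/- The canonical model function gmod satisfies the fixed-point equations: gmod(Null, ρ, τ, ppos, cpos) = ∅; gmod(bio(v,z).P, ρ, τ, ppos, cpos) = {bio(ppos, v, wρ, cpos·L)} + gmod(P[wρ/z], ρ, τ·bio(v,wρ), cpos·L, cpos·L) where wρ = ρ(τ, bio, v); and gmod(P1 ⊕ P2, ρ, τ, ppos, cpos) = gmod(P1, ρ, τ, ppos, cpos·L) + gmod(P2, ρ, τ, ppos, cpos·R). -/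
/-! Auxiliary lemmas for `gmod_fixed_point`. -/

noncomputable def eS {ι : Type*} (f : ι → ℕ∞) : ℕ∞ := ⨆ F : Finset ι, ∑ i ∈ F, f i

lemma le_eS {ι : Type*} (f : ι → ℕ∞) (F : Finset ι) : ∑ i ∈ F, f i ≤ eS f :=
  le_iSup (fun F : Finset ι => ∑ i ∈ F, f i) F

lemma eS_zero {ι : Type*} : eS (fun _ : ι => (0 : ℕ∞)) = 0 := by
  simp [eS]

lemma eS_option {α : Type*} (g : Option α → ℕ∞) :
    eS g = g none + eS (fun a => g (some a)) := by
  classical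
  apply le_antisymm
  · refine iSup_le fun F => ?_
    have hpt : ∀ x ∈ F, g x =
        (if x = none then g none else 0) + Option.elim' 0 (fun a => g (some a)) x := by
      rintro (_ | a) _ <;> simp [Option.elim']
    calc ∑ x ∈ F, g x
        = ∑ x ∈ F, ((if x = none then g none else 0) +
            Option.elim' 0 (fun a => g (some a)) x) := Finset.sum_congr rfl hpt
      _ = (∑ x ∈ F, if x = none then g none else 0) +
            ∑ x ∈ F, Option.elim' 0 (fun a => g (some a)) x := Finset.sum_add_distrib
      _ ≤ g none + eS (fun a => g (some a)) := by
          gcongr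
          · rw [Finset.sum_ite_eq' F none fun _ => g none]
            split <;> simp
          · rw [← Finset.sum_eraseNone]
            exact le_eS _ _
  · show (g none + ⨆ F : Finset α, ∑ a ∈ F, g (some a)) ≤ eS g
    rw [ENat.add_iSup]
    refine iSup_le fun F => ?_
    have : g none + ∑ a ∈ F, g (some a) = ∑ x ∈ Finset.insertNone F, g x := by
      rw [Finset.sum_insertNone]
    rw [this]
    exact le_eS _ _

lemma eS_sum {α β : Type*} (g : α ⊕ β → ℕ∞) :
    eS g = eS (fun a => g (Sum.inl a)) + eS (fun b => g (Sum.inr b)) := by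
  classical
  apply le_antisymm
  · refine iSup_le fun F => ?_
    have : ∑ x ∈ F, g x = (∑ a ∈ F.toLeft, g (Sum.inl a)) + ∑ b ∈ F.toRight, g (Sum.inr b) := by
      rw [← Finset.sum_disjSum, Finset.toLeft_disjSum_toRight]
    rw [this]
    exact add_le_add (le_eS _ _) (le_eS _ _)
  · show ((⨆ F : Finset α, ∑ a ∈ F, g (Sum.inl a)) + ⨆ F : Finset β, ∑ b ∈ F, g (Sum.inr b)) ≤ eS g
    rw [ENat.iSup_add]
    refine iSup_le fun F1 => ?_
    rw [ENat.add_iSup]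
    refine iSup_le fun F2 => ?_
    rw [← Finset.sum_disjSum]
    exact le_eS _ _

lemma eS_equiv {α β : Type*} (e : α ≃ β) (f : β → ℕ∞) :
    eS (fun a => f (e a)) = eS f := by
  apply le_antisymm
  · refine iSup_le fun F => ?_
    have : ∑ i ∈ F, f (e i) = ∑ j ∈ F.map e.toEmbedding, f j := by
      rw [Finset.sum_map]; rfl
    rw [this]; exact le_eS _ _
  · refine iSup_le fun F => ?_
    have : ∑ j ∈ F, f j = ∑ i ∈ F.map e.symm.toEmbedding, f (e i) := by
      rw [Finset.sum_map]; simp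
    rw [this]; exact le_eS _ _

/-- Lists over `Bool` decompose as `[]`, `true :: l`, or `false :: l`. -/
def listBoolEquiv : Option (List Bool ⊕ List Bool) ≃ List Bool where
  toFun o := match o with
    | none => []
    | some (.inl l) => true :: l
    | some (.inr l) => false :: l
  invFun l := match l with
    | [] => none
    | true :: l => some (.inl l)
    | false :: l => some (.inr l)
  left_inv o := by rcases o with _ | l | l <;> rfl
  right_inv l := by rcases l with _ | ⟨_ | _, l⟩ <;> rfl

lemma eS_split (f : List Bool → ℕ∞) :
    eS f = f [] + eS (fun l => f (true :: l)) + eS (fun l => f (false :: l)) := by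
  rw [← eS_equiv listBoolEquiv f, eS_option, eS_sum, ← add_assoc]
  rfl

lemma gmod_eq_eS {B V : Type} (ρ : List (B × V × V) → B → V → V)
    (P : Proc B V) (τ : List (B × V × V)) (pp cp : List Bool) (c : Chunk B V (List Bool)) :
    gmod ρ P τ pp cp c = eS (fun pos => pm ρ P τ pp cp pos c) := rfl

/-- The fixed-point equations of the canonical model function `gmod`. -/
theorem gmod_fixed_point {B V : Type} (ρ : List (B × V × V) → B → V → V)
    (τ : List (B × V × V)) (pp cp : List Bool) :
    (gmod ρ Proc.null τ pp cp = 0) ∧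
    (∀ (b : B) (v : V) (k : V → Proc B V),
        gmod ρ (Proc.pre b v k) τ pp cp =
          Heap.single (Chunk.bio b pp v (ρ τ b v) (cp ++ [true])) +
            gmod ρ (k (ρ τ b v)) (τ ++ [(b, v, ρ τ b v)]) (cp ++ [true]) (cp ++ [true])) ∧
    (∀ P1 P2 : Proc B V,
        gmod ρ (Proc.choice P1 P2) τ pp cp =
          gmod ρ P1 τ pp (cp ++ [true]) + gmod ρ P2 τ pp (cp ++ [false])) := by
  
  refine ⟨?_, ?_, ?_⟩
  · funext c
    rw [gmod_eq_eS, eS_split]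
    have h0 : ∀ pos, pm ρ (Proc.null (B := B) (V := V)) τ pp cp pos c = 0 := by
      intro pos
      cases pos with
      | nil => simp [pm, Proc.null, PFunctor.M.dest_mk]; rfl
      | cons d pos => simp [pm, Proc.null, PFunctor.M.dest_mk]; cases d <;> rfl
    simp only [h0, eS_zero]
    simp
  · intro b v k
    funext c
    rw [gmod_eq_eS, eS_split]
    have h0 : pm ρ (Proc.pre b v k) τ pp cp [] c =
        Heap.single (Chunk.bio b pp v (ρ τ b v) (cp ++ [true])) c := by
      simp [pm, Proc.pre, PFunctor.M.dest_mk]; rfl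
    have ht : ∀ pos, pm ρ (Proc.pre b v k) τ pp cp (true :: pos) c =
        pm ρ (k (ρ τ b v)) (τ ++ [(b, v, ρ τ b v)]) (cp ++ [true]) (cp ++ [true]) pos c := by
      intro pos; simp [pm, Proc.pre, PFunctor.M.dest_mk]; rfl
    have hf : ∀ pos, pm ρ (Proc.pre b v k) τ pp cp (false :: pos) c = 0 := by
      intro pos; simp [pm, Proc.pre, PFunctor.M.dest_mk]; rfl
    simp only [h0, ht, hf, eS_zero, add_zero]
    rfl
  · intro P1 P2
    funext c
    rw [gmod_eq_eS, eS_split]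
    have h0 : pm ρ (Proc.choice P1 P2) τ pp cp [] c = 0 := by
      simp [pm, Proc.choice, PFunctor.M.dest_mk]; rfl
    have ht : ∀ pos, pm ρ (Proc.choice P1 P2) τ pp cp (true :: pos) c =
        pm ρ P1 τ pp (cp ++ [true]) pos c := by
      intro pos; simp [pm, Proc.choice, PFunctor.M.dest_mk]; rfl
    have hf : ∀ pos, pm ρ (Proc.choice P1 P2) τ pp cp (false :: pos) c =
        pm ρ P2 τ pp (cp ++ [false]) pos c := by
      intro pos; simp [pm, Proc.choice, PFunctor.M.dest_mk]; rfl
    simp only [h0, ht, hf, zero_add]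
    rfl
end

section
/- Canonical models are models of the process assertion: for every process P and well-typed input schedule ρ, the heap cmod(P, ρ) = gmod(P, ρ, [], [], []) satisfies the assertion emb(P, []). -/
section AuxCmod

open Classical

lemma iSup_finsetSum_cons_aux (G : List Bool → ℕ∞) :
    (⨆ S : Finset (List Bool), ∑ p ∈ S, G p)
      = G [] + (⨆ S : Finset (List Bool), ∑ p ∈ S, G (true :: p))
        + ⨆ S : Finset (List Bool), ∑ p ∈ S, G (false :: p) := by
  have hinjT : Function.Injective (fun p : List Bool => true :: p) :=
    fun a b h => by injection h
  have hinjF : Function.Injective (fun p : List Bool => false :: p) :=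
    fun a b h => by injection h
  apply le_antisymm
  · refine iSup_le fun S => ?_
    set T := S.image List.tail with hT
    have hsub : S ⊆ insert ([] : List Bool)
        ((T.image (true :: ·)) ∪ (T.image (false :: ·))) := by
      intro p hp
      match p with
      | [] => simp
      | true :: q =>
        simp only [Finset.mem_insert, Finset.mem_union, Finset.mem_image, hT]
        exact Or.inr (Or.inl ⟨q, ⟨true :: q, hp, rfl⟩, rfl⟩)
      | false :: q =>
        simp only [Finset.mem_insert, Finset.mem_union, Finset.mem_image, hT]
        exact Or.inr (Or.inr ⟨q, ⟨false :: q, hp, rfl⟩, rfl⟩)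
    have hne : ([] : List Bool) ∉ (T.image (true :: ·)) ∪ (T.image (false :: ·)) := by simp
    calc ∑ p ∈ S, G p
        ≤ ∑ p ∈ insert ([] : List Bool) ((T.image (true :: ·)) ∪ (T.image (false :: ·))), G p :=
          Finset.sum_le_sum_of_subset hsub
      _ = G [] + ∑ p ∈ (T.image (true :: ·)) ∪ (T.image (false :: ·)), G p := by
          rw [Finset.sum_insert hne]
      _ = G [] + (∑ p ∈ T.image (true :: ·), G p + ∑ p ∈ T.image (false :: ·), G p) := by
          rw [Finset.sum_union (by
            simp only [Finset.disjoint_left, Finset.mem_image]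
            rintro p ⟨a, _, rfl⟩ ⟨b, _, h⟩
            exact Bool.noConfusion (List.head_eq_of_cons_eq h.symm))]
      _ = G [] + ((∑ p ∈ T, G (true :: p)) + ∑ p ∈ T, G (false :: p)) := by
          rw [Finset.sum_image (fun a _ b _ h => hinjT h),
            Finset.sum_image (fun a _ b _ h => hinjF h)]
      _ ≤ G [] + (⨆ S : Finset (List Bool), ∑ p ∈ S, G (true :: p))
            + ⨆ S : Finset (List Bool), ∑ p ∈ S, G (false :: p) := by
          rw [add_assoc]
          gcongr
          · exact le_iSup (fun S : Finset (List Bool) => ∑ p ∈ S, G (true :: p)) T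
          · exact le_iSup (fun S : Finset (List Bool) => ∑ p ∈ S, G (false :: p)) T
  · have h1 : ∀ S₁ S₂ : Finset (List Bool),
        G [] + (∑ p ∈ S₁, G (true :: p)) + ∑ p ∈ S₂, G (false :: p)
          ≤ ⨆ S : Finset (List Bool), ∑ p ∈ S, G p := by
      intro S₁ S₂
      have hd : Disjoint (S₁.image (true :: ·)) (S₂.image (false :: ·)) := by
        simp only [Finset.disjoint_left, Finset.mem_image]
        rintro p ⟨a, _, rfl⟩ ⟨b, _, h⟩
        exact Bool.noConfusion (List.head_eq_of_cons_eq h.symm)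
      have hne : ([] : List Bool) ∉ S₁.image (true :: ·) ∪ S₂.image (false :: ·) := by simp
      have hle := le_iSup (fun S : Finset (List Bool) => ∑ p ∈ S, G p)
        (insert [] (S₁.image (true :: ·) ∪ S₂.image (false :: ·)))
      rw [Finset.sum_insert hne, Finset.sum_union hd,
        Finset.sum_image (fun a _ b _ h => hinjT h),
        Finset.sum_image (fun a _ b _ h => hinjF h), ← add_assoc] at hle
      exact hle
    have e1 : G [] + (⨆ S : Finset (List Bool), ∑ p ∈ S, G (true :: p))
        = ⨆ S : Finset (List Bool), G [] + ∑ p ∈ S, G (true :: p) := ENat.add_iSup _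
    rw [e1]
    exact ENat.iSup_add_iSup_le h1

end AuxCmod
section AuxCmod2

variable {B V : Type} (ρ : List (B × V × V) → B → V → V)

lemma pm_nil_pre {P : Proc B V} {b : B} {v : V} {k : V → Proc B V}
    (hP : PFunctor.M.dest P = ⟨.pre b v, k⟩) (τ : List (B × V × V)) (pp cp : List Bool) :
    pm ρ P τ pp cp [] = Heap.single (Chunk.bio b pp v (ρ τ b v) (cp ++ [true])) := by
  simp [pm, hP]

lemma pm_nil_choice {P : Proc B V} {f : Bool → Proc B V}
    (hP : PFunctor.M.dest P = ⟨.choice, f⟩) (τ : List (B × V × V)) (pp cp : List Bool) :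
    pm ρ P τ pp cp [] = 0 := by
  simp [pm, hP]

lemma pm_nil_null {P : Proc B V} {e : Empty → Proc B V}
    (hP : PFunctor.M.dest P = ⟨.null, e⟩) (τ : List (B × V × V)) (pp cp : List Bool) :
    pm ρ P τ pp cp [] = 0 := by
  simp [pm, hP]

lemma pm_cons_pre_true {P : Proc B V} {b : B} {v : V} {k : V → Proc B V}
    (hP : PFunctor.M.dest P = ⟨.pre b v, k⟩) (τ : List (B × V × V)) (pp cp pos : List Bool) :
    pm ρ P τ pp cp (true :: pos)
      = pm ρ (k (ρ τ b v)) (τ ++ [(b, v, ρ τ b v)]) (cp ++ [true]) (cp ++ [true]) pos := by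
  simp [pm, hP]

lemma pm_cons_pre_false {P : Proc B V} {b : B} {v : V} {k : V → Proc B V}
    (hP : PFunctor.M.dest P = ⟨.pre b v, k⟩) (τ : List (B × V × V)) (pp cp pos : List Bool) :
    pm ρ P τ pp cp (false :: pos) = 0 := by
  simp [pm, hP]

lemma pm_cons_choice {P : Proc B V} {f : Bool → Proc B V}
    (hP : PFunctor.M.dest P = ⟨.choice, f⟩) (τ : List (B × V × V)) (pp cp pos : List Bool)
    (d : Bool) :
    pm ρ P τ pp cp (d :: pos) = pm ρ (f d) τ pp (cp ++ [d]) pos := by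
  simp [pm, hP]

lemma gmod_choice {P : Proc B V} {f : Bool → Proc B V}
    (hP : PFunctor.M.dest P = ⟨.choice, f⟩) (τ : List (B × V × V)) (pp cp : List Bool) :
    gmod ρ P τ pp cp
      = gmod ρ (f true) τ pp (cp ++ [true]) + gmod ρ (f false) τ pp (cp ++ [false]) := by
  funext c
  have h := iSup_finsetSum_cons_aux (fun pos => pm ρ P τ pp cp pos c)
  simp only [pm_nil_choice ρ hP, pm_cons_choice ρ hP, Pi.zero_apply, zero_add] at h
  exact h

lemma gmod_pre {P : Proc B V} {b : B} {v : V} {k : V → Proc B V}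
    (hP : PFunctor.M.dest P = ⟨.pre b v, k⟩) (τ : List (B × V × V)) (pp cp : List Bool) :
    gmod ρ P τ pp cp
      = Heap.single (Chunk.bio b pp v (ρ τ b v) (cp ++ [true]))
        + gmod ρ (k (ρ τ b v)) (τ ++ [(b, v, ρ τ b v)]) (cp ++ [true]) (cp ++ [true]) := by
  funext c
  have h := iSup_finsetSum_cons_aux (fun pos => pm ρ P τ pp cp pos c)
  simp only [pm_nil_pre ρ hP, pm_cons_pre_true ρ hP, pm_cons_pre_false ρ hP,
    Pi.zero_apply, Finset.sum_const_zero, ciSup_const, add_zero] at h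
  exact h

end AuxCmod2
section AuxCmod3

variable {B V : Type}

/-- The coinduction relation for `cmod_models_emb`. -/
def cmodRel (Ty : B → V → Set V) (ρ : List (B × V × V) → B → V → V) :
    Heap B V (List Bool) → Assn B V (List Bool) → Prop := fun h φ =>
  (∃ (P : Proc B V) (τ : List (B × V × V)) (pp cp : List Bool),
      h = gmod ρ P τ pp cp ∧ φ = PFunctor.M.corec embStep (.proc P pp))
  ∨ (∃ (P : Proc B V) (b : B) (v : V) (k : V → Proc B V) (τ : List (B × V × V))
        (pp cp : List Bool),
      PFunctor.M.dest P = ⟨.pre b v, k⟩ ∧ h = gmod ρ P τ pp cp ∧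
        φ = PFunctor.M.corec embStep (.ex1 b v k pp (cp ++ [true])))
  ∨ (∃ (P : Proc B V) (b : B) (v : V) (k : V → Proc B V) (τ : List (B × V × V))
        (pp cp : List Bool),
      PFunctor.M.dest P = ⟨.pre b v, k⟩ ∧ h = gmod ρ P τ pp cp ∧
        φ = PFunctor.M.corec embStep (.star1 b v k pp (cp ++ [true]) (ρ τ b v)))
  ∨ (∃ c : Chunk B V (List Bool),
      φ = PFunctor.M.corec embStep (.leafChunk c) ∧ 0 < h c ∧ c.wellTyped Ty)

lemma cmodRel_post (Ty : B → V → Set V) (ρ : List (B × V × V) → B → V → V)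
    (hρ : schedWT Ty ρ) :
    ∀ h φ, cmodRel Ty ρ h φ → SatF Ty (cmodRel Ty ρ) h φ := by
  rintro h φ (⟨P, τ, pp, cp, rfl, rfl⟩ | ⟨P, b, v, k, τ, pp, cp, hP, rfl, rfl⟩ |
    ⟨P, b, v, k, τ, pp, cp, hP, rfl, rfl⟩ | ⟨c, rfl, hc, hwt⟩)
  · -- proc case
    rcases hQ : PFunctor.M.dest P with ⟨hd, f⟩
    cases hd with
    | null =>
      simp only [SatF, PFunctor.M.dest_corec, embStep, hQ, PFunctor.map]
    | pre b v =>
      simp only [SatF, PFunctor.M.dest_corec, embStep, hQ, PFunctor.map, Function.comp]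
      exact ⟨cp ++ [true], Or.inr (Or.inl ⟨P, b, v, f, τ, pp, cp, hQ, rfl, rfl⟩)⟩
    | choice =>
      simp only [SatF, PFunctor.M.dest_corec, embStep, hQ, PFunctor.map, Function.comp]
      exact ⟨gmod ρ (f true) τ pp (cp ++ [true]), gmod ρ (f false) τ pp (cp ++ [false]),
        gmod_choice ρ hQ τ pp cp,
        Or.inl ⟨f true, τ, pp, cp ++ [true], rfl, rfl⟩,
        Or.inl ⟨f false, τ, pp, cp ++ [false], rfl, rfl⟩⟩
  · -- ex1 case
    simp only [SatF, PFunctor.M.dest_corec, embStep, PFunctor.map, Function.comp]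
    exact ⟨ρ τ b v, Or.inr (Or.inr (Or.inl ⟨P, b, v, k, τ, pp, cp, hP, rfl, rfl⟩))⟩
  · -- star1 case
    simp only [SatF, PFunctor.M.dest_corec, embStep, PFunctor.map, Function.comp,
      if_true, if_false, Bool.false_eq_true]
    refine ⟨Heap.single (Chunk.bio b pp v (ρ τ b v) (cp ++ [true])),
      gmod ρ (k (ρ τ b v)) (τ ++ [(b, v, ρ τ b v)]) (cp ++ [true]) (cp ++ [true]),
      gmod_pre ρ hP τ pp cp, ?_, ?_⟩
    · exact Or.inr (Or.inr (Or.inr ⟨_, rfl, by simp [Heap.single], hρ τ b v⟩))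
    · exact Or.inl ⟨k (ρ τ b v), τ ++ [(b, v, ρ τ b v)], cp ++ [true], cp ++ [true], rfl, rfl⟩
  · -- leaf case
    simp only [SatF, PFunctor.M.dest_corec, embStep, PFunctor.map]
    exact ⟨hc, hwt⟩

end AuxCmod3

/-- Canonical models are models of the process assertion: for every process `P`
and well-typed input schedule `ρ`, the canonical heap `cmod(P, ρ)` satisfies
`emb(P, [])`. -/
theorem cmod_models_emb {B V : Type} (Ty : B → V → Set V)
    (ρ : List (B × V × V) → B → V → V) (hρ : schedWT Ty ρ) (P : Proc B V) :
    sat Ty (cmod ρ P) (embA P ([] : List Bool)) :=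
  ⟨cmodRel Ty ρ, cmodRel_post Ty ρ hρ, Or.inl ⟨P, [], [], [], rfl, rfl⟩⟩
end

section
/- Transitions with the scheduled input never lead to the chaotic state: if gmod(P, ρ, τ, ppos, cpos) with a token at ppos makes a heap transition labeled bio(v, w) to state ho, where ppos ≤ cpos and w = ρ(τ, bio, v), then ho ≠ ⊥. -/
lemma pm_token_eq {B V : Type} (ρ : List (B × V × V) → B → V → V) :
    ∀ (pos : List Bool) (P : Proc B V) (τ : List (B × V × V)) (pp cp t : List Bool),
      pm ρ P τ pp cp pos (Chunk.token t) = 0 := by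
  intro pos
  induction pos with
  | nil =>
    intro P τ pp cp t
    rcases hd : PFunctor.M.dest P with ⟨h, f⟩
    cases h <;> simp [pm, hd, Heap.single]
  | cons d pos ih =>
    intro P τ pp cp t
    rcases hd : PFunctor.M.dest P with ⟨h, f⟩
    cases h <;> cases d <;> simp [pm, hd, ih] <;> exact ih _ _ _ _ _

lemma gmod_token_eq {B V : Type} (ρ : List (B × V × V) → B → V → V)
    (P : Proc B V) (τ : List (B × V × V)) (pp cp t : List Bool) :
    gmod ρ P τ pp cp (Chunk.token t) = 0 := by
  simp [gmod, hSum, pm_token_eq]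

lemma pm_bio_src {B V : Type} (ρ : List (B × V × V) → B → V → V)
    (b : B) (v w : V) (t t' : List Bool) :
    ∀ (pos : List Bool) (P : Proc B V) (τ : List (B × V × V)) (pp cp : List Bool),
      pp <+: cp → pm ρ P τ pp cp pos (Chunk.bio b t v w t') ≠ 0 →
      (t = pp ∧ w = ρ τ b v) ∨ cp.length < t.length := by
  intro pos
  induction pos with
  | nil =>
    intro P τ pp cp hpc hne
    rcases hd : PFunctor.M.dest P with ⟨h, f⟩
    cases h with
    | pre b' v' =>
      by_cases hc : Chunk.bio b t v w t' = Chunk.bio b' pp v' (ρ τ b' v') (cp ++ [true])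
      · cases hc
        exact Or.inl ⟨rfl, rfl⟩
      · exfalso; apply hne; simp [pm, hd, Heap.single, hc]
    | null => exfalso; apply hne; simp [pm, hd]
    | choice => exfalso; apply hne; simp [pm, hd]
  | cons d pos ih =>
    intro P τ pp cp hpc hne
    rcases hd : PFunctor.M.dest P with ⟨h, f⟩
    cases h with
    | pre b' v' =>
      cases d with
      | true =>
        simp only [pm, hd] at hne
        rcases ih _ _ _ _ (List.prefix_refl _) hne with ⟨h1, _⟩ | h1
        · subst h1; right; simp
        · right
          have : cp.length < (cp ++ [true]).length := by simp
          omega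
      | false => exfalso; apply hne; simp [pm, hd]
    | null => exfalso; apply hne; cases d <;> simp [pm, hd]
    | choice =>
      simp only [pm, hd] at hne
      rcases ih _ _ _ _ (hpc.trans (List.prefix_append _ _)) hne with h1 | h1
      · exact Or.inl h1
      · right
        have : cp.length < (cp ++ [d]).length := by simp
        omega

lemma gmod_exists_pos {B V : Type} (ρ : List (B × V × V) → B → V → V)
    (P : Proc B V) (τ : List (B × V × V)) (pp cp : List Bool)
    (c : Chunk B V (List Bool)) (h : gmod ρ P τ pp cp c ≠ 0) :
    ∃ pos, pm ρ P τ pp cp pos c ≠ 0 := by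
  by_contra hc
  push_neg at hc
  exact h (by simp [gmod, hSum, hc])

/-- Transitions with the scheduled input never lead to the chaotic state ⊥. -/
theorem scheduled_input_no_chaos {B V : Type} (Ty : B → V → Set V)
    (ρ : List (B × V × V) → B → V → V) (P : Proc B V) (τ : List (B × V × V))
    (pp cp : List Bool) (b : B) (v : V) (ho : Option (Heap B V (List Bool)))
    (hpc : pp <+: cp)
    (ht : HTrans Ty (some (gmodTok ρ P τ pp cp)) (b, v, ρ τ b v) ho) :
    ho ≠ none := by
  generalize hsrc : some (gmodTok ρ P τ pp cp) = src at ht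
  cases ht with
  | bio _ => simp
  | chaos _ => exact absurd hsrc (by simp)
  | @contradict b' v' w w' t t' h hww' hw hw' =>
    intro _
    injection hsrc with hsrc
    have h1 := congrFun hsrc (Chunk.token t)
    have htpp : t = pp := by
      by_contra hne
      simp [gmodTok, gmod_token_eq, Heap.single, Pi.add_apply, hne,
        Ne.symm hne] at h1
      rw [eq_comm, add_eq_zero] at h1
      exact one_ne_zero h1.1
    subst htpp
    have h2 := congrFun hsrc (Chunk.bio b t v w t')
    simp [gmodTok, Heap.single, Pi.add_apply] at h2
    have hne : gmod ρ P τ t cp (Chunk.bio b t v w t') ≠ 0 := by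
      rw [h2]; simp
    obtain ⟨pos, hpos⟩ := gmod_exists_pos ρ P τ t cp _ hne
    rcases pm_bio_src ρ b v w t t' pos P τ t cp hpc hpos with ⟨_, hwe⟩ | hlt
    · exact hww' hwe
    · have := hpc.length_le
      omega
end
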